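/- arXiv:2302.10070 — 6 statements merged into one kernel-verified Lean document; each statement's English description precedes it below -/
import Mathlib

section
/- Let f(t) = 1 - H(1/2+t) and g(t) = H((1+t)/2) - (H(1/2+t)+1)/2, where H is binary entropy base 2. Then lim_{t→0+} g(t)/f(t) = 1/4. -/
open Real Filter Set Topology

noncomputable def binEnt (s : ℝ) : ℝ :=
  (-s * Real.log s - (1 - s) * Real.log (1 - s)) / Real.log 2

noncomputable def fJS (t : ℝ) : ℝ := 1 - binEnt (1 / 2 + t)

noncomputable def gJS (t : ℝ) : ℝ := binEnt ((1 + t) / 2) - (binEnt (1 / 2 + t) + 1) / 2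

noncomputable def PJS (t : ℝ) : ℝ :=
  Real.log 2 + (1/2 + t) * Real.log (1/2 + t) + (1/2 - t) * Real.log (1/2 - t)

lemma log2_ne : Real.log 2 ≠ 0 := by
  have := Real.log_pos (by norm_num : (1:ℝ) < 2)
  linarith

lemma fJS_eq (t : ℝ) : fJS t = PJS t / Real.log 2 := by
  unfold fJS binEnt PJS
  have h : (1 : ℝ) - (1/2 + t) = 1/2 - t := by ring
  rw [show (1:ℝ)/2 + t = 1/2 + t from by norm_num, h]
  field_simp
  ring

lemma gJS_eq (t : ℝ) : gJS t = (PJS t / 2 - PJS (t/2)) / Real.log 2 := by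
  unfold gJS binEnt PJS
  rw [show ((1:ℝ) + t)/2 = 1/2 + t/2 from by ring,
    show (1:ℝ) - (1/2 + t/2) = 1/2 - t/2 from by ring,
    show (1:ℝ) - (1/2 + t) = 1/2 - t from by ring]
  field_simp
  ring

lemma hasDerivAt_PJS {t : ℝ} (h1 : (1:ℝ)/2 + t ≠ 0) (h2 : (1:ℝ)/2 - t ≠ 0) :
    HasDerivAt PJS (Real.log (1/2 + t) - Real.log (1/2 - t)) t := by
  have ha : HasDerivAt (fun t : ℝ => 1/2 + t) 1 t := by
    simpa using (hasDerivAt_id t).const_add (1/2 : ℝ)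
  have hb : HasDerivAt (fun t : ℝ => 1/2 - t) (-1) t := by
    simpa using (hasDerivAt_id t).const_sub (1/2 : ℝ)
  have hla : HasDerivAt (fun t : ℝ => Real.log (1/2 + t)) (1 / (1/2 + t)) t := by
    simpa using ha.log h1
  have hlb : HasDerivAt (fun t : ℝ => Real.log (1/2 - t)) (-1 / (1/2 - t)) t := by
    simpa using hb.log h2
  have h := ((ha.mul hla).add (hb.mul hlb)).const_add (Real.log 2)
  convert h using 1
  · rfl
  · rfl
  · funext x; unfold PJS; simp only [Pi.mul_apply, Pi.add_apply]; ring
  · have e1 : (1/2 + t) * (1 / (1/2 + t)) = 1 := by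
      rw [mul_one_div, div_self h1]
    have e2 : (1/2 - t) * (-1 / (1/2 - t)) = -1 := by
      rw [mul_div_assoc', mul_neg_one, neg_div, div_self h2]
    rw [e1, e2]
    ring

lemma slope_limit :
    Filter.Tendsto (fun t => (Real.log (1/2 + t) - Real.log (1/2 - t)) / t)
      (nhdsWithin 0 (Set.Ioi 0)) (nhds 4) := by
  have ha : HasDerivAt (fun t : ℝ => 1/2 + t) 1 0 := by
    simpa using (hasDerivAt_id (0:ℝ)).const_add (1/2 : ℝ)
  have hb : HasDerivAt (fun t : ℝ => 1/2 - t) (-1) 0 := by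
    simpa using (hasDerivAt_id (0:ℝ)).const_sub (1/2 : ℝ)
  have hla : HasDerivAt (fun t : ℝ => Real.log (1/2 + t)) 2 0 := by
    have := ha.log (by norm_num : (1:ℝ)/2 + 0 ≠ 0)
    norm_num at this
    convert this using 1
  have hlb : HasDerivAt (fun t : ℝ => Real.log (1/2 - t)) (-2) 0 := by
    have := hb.log (by norm_num : (1:ℝ)/2 - 0 ≠ 0)
    norm_num at this
    convert this using 1
  have hu : HasDerivAt (fun t : ℝ => Real.log (1/2 + t) - Real.log (1/2 - t)) 4 0 := by
    have := hla.sub hlb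
    norm_num at this
    exact this
  have hs := hasDerivAt_iff_tendsto_slope.mp hu
  have : Filter.Tendsto (slope (fun t : ℝ => Real.log (1/2 + t) - Real.log (1/2 - t)) 0)
      (nhdsWithin 0 (Set.Ioi 0)) (nhds 4) :=
    hs.mono_left (nhdsWithin_mono 0 (fun x hx => ne_of_gt hx))
  refine this.congr' ?_
  filter_upwards [self_mem_nhdsWithin] with t ht
  simp [slope, (show (0:ℝ) < t from ht).ne', sub_zero, div_eq_inv_mul]

lemma PJS_limit :
    Filter.Tendsto (fun t => PJS t / t^2) (nhdsWithin 0 (Set.Ioi 0)) (nhds 2) := by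
  apply HasDerivAt.lhopital_zero_right_on_Ioo (show (0:ℝ) < 1/4 by norm_num)
    (f' := fun t => Real.log (1/2 + t) - Real.log (1/2 - t)) (g' := fun t => 2 * t)
  · intro x hx
    exact hasDerivAt_PJS (by nlinarith [hx.1, hx.2]) (by nlinarith [hx.1, hx.2])
  · intro x hx
    simpa using (hasDerivAt_pow 2 x)
  · intro x hx
    exact mul_ne_zero two_ne_zero (ne_of_gt hx.1)
  · have hc : ContinuousAt PJS 0 := by
      apply ContinuousAt.add
      apply ContinuousAt.add continuousAt_const
      · exact ((continuousAt_const.add continuousAt_id).mul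
          ((continuousAt_const.add continuousAt_id).log (by norm_num)))
      · exact ((continuousAt_const.sub continuousAt_id).mul
          ((continuousAt_const.sub continuousAt_id).log (by norm_num)))
    have h0 : PJS 0 = 0 := by
      unfold PJS
      rw [show (1:ℝ)/2 + 0 = 1/2 by norm_num, show (1:ℝ)/2 - 0 = 1/2 by norm_num,
        show Real.log (1/2 : ℝ) = -Real.log 2 by
          rw [show (1:ℝ)/2 = 2⁻¹ by norm_num, Real.log_inv]]
      ring
    have ht := hc.tendsto
    rw [h0] at ht
    exact ht.mono_left nhdsWithin_le_nhds
  · have : Filter.Tendsto (fun t : ℝ => t^2) (nhds 0) (nhds 0) := by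
      simpa using (continuous_pow 2).tendsto (0:ℝ)
    exact this.mono_left nhdsWithin_le_nhds
  · have h := slope_limit
    have : Filter.Tendsto (fun t => ((Real.log (1/2 + t) - Real.log (1/2 - t)) / t) / 2)
        (nhdsWithin 0 (Set.Ioi 0)) (nhds 2) := by
      have := h.div_const 2
      norm_num at this
      exact this
    refine this.congr' ?_
    filter_upwards [self_mem_nhdsWithin] with t ht
    field_simp

theorem gJS_div_fJS_tendsto :
    Filter.Tendsto (fun t => gJS t / fJS t) (nhdsWithin 0 (Set.Ioi 0)) (nhds (1 / 4)) := by
  have hP := PJS_limit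
  -- eventually PJS t > 0
  have hpos : ∀ᶠ t in nhdsWithin 0 (Set.Ioi 0), 0 < PJS t := by
    have h1 : ∀ᶠ t in nhdsWithin 0 (Set.Ioi 0), 1 < PJS t / t^2 :=
      hP.eventually (eventually_gt_nhds (by norm_num))
    filter_upwards [h1, self_mem_nhdsWithin] with t ht ht'
    have ht2 : (0:ℝ) < t^2 := pow_pos ht' 2
    have := (one_lt_div ht2).mp ht
    linarith
  -- limit of PJS(t/2)/PJS(t)
  have hhalf : Filter.Tendsto (fun t : ℝ => t/2) (nhdsWithin 0 (Set.Ioi 0))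
      (nhdsWithin 0 (Set.Ioi 0)) := by
    apply tendsto_nhdsWithin_of_tendsto_nhds_of_eventually_within
    · simpa using ((tendsto_id (α := ℝ) (x := nhds 0)).div_const 2).mono_left
        (nhdsWithin_le_nhds (s := Set.Ioi 0))
    · filter_upwards [self_mem_nhdsWithin] with t ht
      exact div_pos (show (0:ℝ) < t from ht) (by norm_num)
  have hP2 : Filter.Tendsto (fun t => PJS (t/2) / (t/2)^2) (nhdsWithin 0 (Set.Ioi 0)) (nhds 2) :=
    hP.comp hhalf
  have hinv : Filter.Tendsto (fun t => t^2 / PJS t) (nhdsWithin 0 (Set.Ioi 0)) (nhds (1/2)) := by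
    have := hP.inv₀ (by norm_num)
    have h2 : Filter.Tendsto (fun t => (PJS t / t^2)⁻¹) (nhdsWithin 0 (Set.Ioi 0))
        (nhds (1/2)) := by
      convert this using 2
      norm_num
    refine h2.congr' ?_
    filter_upwards [self_mem_nhdsWithin] with t ht
    rw [inv_div]
  have hratio : Filter.Tendsto (fun t => PJS (t/2) / PJS t) (nhdsWithin 0 (Set.Ioi 0))
      (nhds (1/4)) := by
    have hmul := (hP2.mul hinv)
    have : Filter.Tendsto (fun t => (PJS (t/2) / (t/2)^2) * (t^2 / PJS t) * (1/4))
        (nhdsWithin 0 (Set.Ioi 0)) (nhds (2 * (1/2) * (1/4))) := hmul.mul_const _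
    norm_num at this
    refine this.congr' ?_
    filter_upwards [self_mem_nhdsWithin, hpos] with t ht hpt
    have ht0 : t ≠ 0 := ht.ne'
    field_simp
    ring
  have hfinal : Filter.Tendsto (fun t => 1/2 - PJS (t/2) / PJS t) (nhdsWithin 0 (Set.Ioi 0))
      (nhds (1/4)) := by
    have := (tendsto_const_nhds (α := ℝ) (x := (1:ℝ)/2)
      (f := nhdsWithin 0 (Set.Ioi 0))).sub hratio
    norm_num at this ⊢
    exact this
  refine hfinal.congr' ?_
  filter_upwards [hpos] with t hpt
  rw [gJS_eq, fJS_eq]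
  rw [div_div_div_eq]
  field_simp [hpt.ne', log2_ne]
end

section
/- For every α > 1/2 there exists t ∈ (0,1/2) such that (1 - H(1/2+t))^α > 2·(H((1+t)/2) - (H(1/2+t)+1)/2)^α, where H is binary entropy base 2. -/
noncomputable def gg (x : ℝ) : ℝ :=
  (1 + x) * Real.log (1 + x) + (1 - x) * Real.log (1 - x)

lemma log_taylor_bound {x : ℝ} (h0 : 0 ≤ x) (h1 : x ≤ 1/2) :
    |Real.log (1 - x) + (x + x^2/2 + x^3/3 + x^4/4)| ≤ 2 * x^5 := by
  have hx : |x| < 1 := by rw [abs_of_nonneg h0]; linarith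
  have := Real.abs_log_sub_add_sum_range_le hx 4
  rw [abs_of_nonneg h0] at this
  simp [Finset.sum_range_succ] at this
  calc |Real.log (1 - x) + (x + x^2/2 + x^3/3 + x^4/4)|
      = |(x + x ^ 2 / 2 + x ^ 3 / 3 + x ^ 4 / 4) + Real.log (1 - x)| := by ring_nf
    _ ≤ x ^ 5 / (1 - x) := by convert this using 2 <;> ring
    _ ≤ 2 * x^5 := by
        rw [div_le_iff₀ (by linarith)]
        nlinarith [pow_nonneg h0 5]

lemma gg_approx {x : ℝ} (h0 : 0 ≤ x) (h1 : x ≤ 1/2) :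
    |gg x - (x^2 + x^4/6)| ≤ 4 * x^5 := by
  have hA := log_taylor_bound h0 h1
  have h0' : 0 ≤ -x → True := fun _ => trivial
  -- bound for log(1+x): apply with x := -x
  have hx : |(-x)| < 1 := by rw [abs_neg, abs_of_nonneg h0]; linarith
  have hB := Real.abs_log_sub_add_sum_range_le hx 4
  rw [abs_neg, abs_of_nonneg h0] at hB
  simp [Finset.sum_range_succ] at hB
  have hB' : |Real.log (1 + x) - (x - x^2/2 + x^3/3 - x^4/4)| ≤ 2 * x^5 := by
    calc |Real.log (1 + x) - (x - x^2/2 + x^3/3 - x^4/4)|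
        = |(-x + (-x) ^ 2 / 2 + (-x) ^ 3 / 3 + (-x) ^ 4 / 4) + Real.log (1 - -x)| := by
          rw [show (1 : ℝ) - -x = 1 + x by ring]; ring_nf
      _ ≤ x ^ 5 / (1 - x) := by convert hB using 2 <;> ring
      _ ≤ 2 * x^5 := by
          rw [div_le_iff₀ (by linarith)]
          nlinarith [pow_nonneg h0 5]
  have key : gg x - (x^2 + x^4/6) =
      (1 + x) * (Real.log (1 + x) - (x - x^2/2 + x^3/3 - x^4/4))
      + (1 - x) * (Real.log (1 - x) + (x + x^2/2 + x^3/3 + x^4/4)) := by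
    simp only [gg]; ring
  rw [key]
  calc |(1 + x) * (Real.log (1 + x) - (x - x^2/2 + x^3/3 - x^4/4))
      + (1 - x) * (Real.log (1 - x) + (x + x^2/2 + x^3/3 + x^4/4))|
      ≤ |(1 + x) * (Real.log (1 + x) - (x - x^2/2 + x^3/3 - x^4/4))|
      + |(1 - x) * (Real.log (1 - x) + (x + x^2/2 + x^3/3 + x^4/4))| := abs_add_le _ _
    _ = (1 + x) * |Real.log (1 + x) - (x - x^2/2 + x^3/3 - x^4/4)|
      + (1 - x) * |Real.log (1 - x) + (x + x^2/2 + x^3/3 + x^4/4)| := by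
        rw [abs_mul, abs_mul, abs_of_nonneg (by linarith : (0:ℝ) ≤ 1 + x),
          abs_of_nonneg (by linarith : (0:ℝ) ≤ 1 - x)]
    _ ≤ (1 + x) * (2 * x^5) + (1 - x) * (2 * x^5) := by
        gcongr <;> linarith
    _ = 4 * x^5 := by ring

lemma gg_lb {x : ℝ} (h0 : 0 ≤ x) (h1 : x ≤ 1/24) : x^2 ≤ gg x := by
  have h := gg_approx h0 (by linarith)
  have h' := abs_le.1 h
  nlinarith [pow_nonneg h0 4]

lemma gg_ub {x : ℝ} (h0 : 0 ≤ x) (h1 : x ≤ 1/24) : gg x ≤ x^2 + x^4 := by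
  have h := gg_approx h0 (by linarith)
  have h' := abs_le.1 h
  nlinarith [pow_nonneg h0 4]

lemma one_sub_binEnt {t : ℝ} (h0 : 0 < t) (h1 : t < 1/2) :
    1 - binEnt (1/2 + t) = gg (2*t) / (2 * Real.log 2) := by
  have hl2 : Real.log 2 ≠ 0 := by
    have := Real.log_pos (by norm_num : (1:ℝ) < 2); linarith
  have e1 : (1/2 + t : ℝ) = (1 + 2*t)/2 := by ring
  have e2 : (1 - (1/2 + t) : ℝ) = (1 - 2*t)/2 := by ring
  have l1 : Real.log (1/2 + t) = Real.log (1 + 2*t) - Real.log 2 := by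
    rw [e1, Real.log_div (by linarith) (by norm_num)]
  have l2 : Real.log (1 - (1/2 + t)) = Real.log (1 - 2*t) - Real.log 2 := by
    rw [e2, Real.log_div (by linarith) (by norm_num)]
  rw [binEnt, l1, l2, gg]
  field_simp
  ring

set_option maxHeartbeats 1000000 in
theorem exists_power_triangle_violation (α : ℝ) (hα : 1 / 2 < α) :
    ∃ t ∈ Set.Ioo (0 : ℝ) (1 / 2),
      (1 - binEnt (1 / 2 + t)) ^ α
        > 2 * (binEnt ((1 + t) / 2) - (binEnt (1 / 2 + t) + 1) / 2) ^ α := by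
  have hαpos : 0 < α := by linarith
  set c : ℝ := (2 : ℝ) ^ (1/α) with hc
  have hc0 : 0 < c := Real.rpow_pos_of_pos (by norm_num) _
  have hc4 : c < 4 := by
    have h2 : (1:ℝ)/α < 2 := by
      rw [div_lt_iff₀ hαpos]; linarith
    have h4 : (2:ℝ) ^ (2:ℝ) = 4 := by
      rw [show (2:ℝ) = ((2:ℕ):ℝ) by norm_num, Real.rpow_natCast]; norm_num
    calc c < (2:ℝ) ^ (2:ℝ) :=
        (Real.rpow_lt_rpow_left_iff (by norm_num : (1:ℝ) < 2)).2 h2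
      _ = 4 := h4
  -- choose t
  obtain ⟨t, ht0, ht48, htc⟩ :
      ∃ t : ℝ, 0 < t ∧ t ≤ 1/48 ∧ (2 < c → 16 * (c - 2) * t^2 < 8 - 2*c) := by
    rcases le_or_gt c 2 with h | h
    · exact ⟨1/48, by norm_num, le_refl _, fun hc2 => absurd hc2 (not_lt.2 h)⟩
    · set ε : ℝ := (4 - c)/(8*(c - 2)) with hε
      have hεpos : 0 < ε := div_pos (by linarith) (by linarith)
      refine ⟨min (1/48) (Real.sqrt ε / 2), ?_, min_le_left _ _, ?_⟩
      · exact lt_min (by norm_num) (by positivity)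
      · intro _
        have h1 : min (1/48) (Real.sqrt ε / 2) ≤ Real.sqrt ε / 2 := min_le_right _ _
        have h2 : (0:ℝ) < min (1/48) (Real.sqrt ε / 2) :=
          lt_min (by norm_num) (by positivity)
        have h3 : (min (1/48) (Real.sqrt ε / 2))^2 ≤ ε / 4 := by
          calc (min (1/48) (Real.sqrt ε / 2))^2 ≤ (Real.sqrt ε / 2)^2 := by
                gcongr
            _ = Real.sqrt ε ^ 2 / 4 := by ring
            _ = ε / 4 := by rw [Real.sq_sqrt hεpos.le]
        have h4 : ε / 4 < ε := by linarith
        have h5 : (min (1/48) (Real.sqrt ε / 2))^2 < ε := lt_of_le_of_lt h3 h4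
        rw [hε, lt_div_iff₀ (by linarith : (0:ℝ) < 8*(c-2))] at h5
        nlinarith
  have ht12 : t < 1/2 := by linarith
  refine ⟨t, ⟨ht0, ht12⟩, ?_⟩
  -- identities
  have hA : 1 - binEnt (1/2 + t) = gg (2*t) / (2 * Real.log 2) :=
    one_sub_binEnt ht0 ht12
  have hA2 : 1 - binEnt (1/2 + t/2) = gg t / (2 * Real.log 2) := by
    have := one_sub_binEnt (t := t/2) (by linarith) (by linarith)
    rw [show 2*(t/2) = t by ring] at this
    exact this
  have hBeq : binEnt ((1 + t)/2) - (binEnt (1/2 + t) + 1)/2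
      = (gg (2*t) - 2 * gg t) / (4 * Real.log 2) := by
    have e : ((1 + t)/2 : ℝ) = 1/2 + t/2 := by ring
    rw [e]
    have hl2 : Real.log 2 ≠ 0 := by
      have := Real.log_pos (by norm_num : (1:ℝ) < 2); linarith
    have h1 : binEnt (1/2 + t/2) = 1 - gg t / (2 * Real.log 2) := by linarith
    have h2 : binEnt (1/2 + t) = 1 - gg (2*t) / (2 * Real.log 2) := by linarith
    rw [h1, h2]
    field_simp
    ring
  -- bounds on gg
  have hgt_lb : t^2 ≤ gg t := gg_lb ht0.le (by linarith)
  have hgt_ub : gg t ≤ t^2 + t^4 := gg_ub ht0.le (by linarith)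
  have hg2t_lb : (2*t)^2 ≤ gg (2*t) := gg_lb (by linarith) (by linarith)
  have hg2t_ub : gg (2*t) ≤ (2*t)^2 + (2*t)^4 := gg_ub (by linarith) (by linarith)
  have hlog2 : 0 < Real.log 2 := Real.log_pos (by norm_num)
  set A : ℝ := 1 - binEnt (1/2 + t) with hAdef
  set B : ℝ := binEnt ((1 + t)/2) - (binEnt (1/2 + t) + 1)/2 with hBdef
  have ht1 : t ≤ 1 := by linarith
  have ht4 : t^4 ≤ t^2 := pow_le_pow_of_le_one ht0.le ht1 (by norm_num)
  have hBnn : 0 ≤ B := by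
    rw [hBeq]
    apply div_nonneg _ (by positivity)
    nlinarith
  have hkey : 2 * c * gg t > (c - 2) * gg (2*t) := by
    rcases le_or_gt c 2 with h | h
    · have h1 : (c - 2) * gg (2*t) ≤ 0 :=
        mul_nonpos_of_nonpos_of_nonneg (by linarith) (by nlinarith)
      have h2 : 0 < 2 * c * gg t := by
        apply mul_pos (by linarith)
        nlinarith
      linarith
    · have hq := htc h
      have h1 : (c - 2) * gg (2*t) ≤ (c - 2) * ((2*t)^2 + (2*t)^4) := by
        apply mul_le_mul_of_nonneg_left hg2t_ub (by linarith)
      have h2 : (c - 2) * ((2*t)^2 + (2*t)^4) < 2 * c * t^2 := by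
        nlinarith [mul_lt_mul_of_pos_right hq (by positivity : (0:ℝ) < t^2)]
      have h3 : 2 * c * t^2 ≤ 2 * c * gg t := by
        apply mul_le_mul_of_nonneg_left hgt_lb (by linarith)
      linarith
  have hstep : c * (gg (2*t) - 2 * gg t) < 2 * gg (2*t) := by nlinarith [hkey]
  have hAcB : c * B < A := by
    rw [hA, hBeq, ← mul_div_assoc]
    rw [div_lt_div_iff₀ (by positivity) (by positivity)]
    have h := mul_lt_mul_of_pos_right hstep
      (by positivity : (0:ℝ) < 2 * Real.log 2)
    nlinarith [h]
  have hcα : c ^ α = 2 := by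
    rw [hc, ← Real.rpow_mul (by norm_num : (0:ℝ) ≤ 2),
      one_div_mul_cancel (ne_of_gt hαpos), Real.rpow_one]
  have hmul : (c * B) ^ α = 2 * B ^ α := by
    rw [Real.mul_rpow hc0.le hBnn, hcα]
  calc 2 * B ^ α = (c * B) ^ α := hmul.symm
    _ < A ^ α := Real.rpow_lt_rpow (by positivity) hAcB hαpos
end

section
/- For any continuous f on (0,∞) and Cauchy densities with parameters (μ1,σ1), (μ2,σ2), the f-divergence D_f(p_{μ1,σ1} : p_{μ2,σ2}) = ∫_ℝ f(p_{μ2,σ2}(x)/p_{μ1,σ1}(x)) p_{μ1,σ1}(x) dx equals (1/π)∫_0^π f(1/(ζ + √(ζ²-1)·cos θ)) dθ, where ζ = 1 + ((μ2-μ1)² + (σ2-σ1)²)/(2σ1σ2). -/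
set_option maxHeartbeats 2000000
open MeasureTheory Real Set

noncomputable def cauchyPdf (μ σ x : ℝ) : ℝ := (σ / Real.pi) * (1 / ((x - μ) ^ 2 + σ ^ 2))

lemma phase (A B : ℝ) : ∃ ψ : ℝ, ∀ t : ℝ,
    A * Real.cos t + B * Real.sin t = Real.sqrt (A^2 + B^2) * Real.cos (t - ψ) := by
  rcases eq_or_ne (A^2 + B^2) 0 with h | h
  · have hA : A = 0 := by nlinarith [sq_nonneg A, sq_nonneg B]
    have hB : B = 0 := by nlinarith [sq_nonneg A, sq_nonneg B]
    exact ⟨0, fun t => by simp [hA, hB]⟩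
  · set z : ℂ := ⟨A, B⟩ with hz
    have hz0 : z ≠ 0 := by
      simp only [ne_eq, Complex.ext_iff, Complex.zero_re, Complex.zero_im, hz, not_and_or]
      by_contra hc
      push_neg at hc
      exact h (by rw [hc.1, hc.2]; ring)
    have habs : ‖z‖ = Real.sqrt (A^2 + B^2) := by
      rw [Complex.norm_def, Complex.normSq_apply]; norm_num [hz]; ring_nf
    refine ⟨Complex.arg z, fun t => ?_⟩
    have hc := Complex.cos_arg hz0
    have hs := Complex.sin_arg z
    rw [Real.cos_sub]
    rw [habs] at hc hs
    have hR : Real.sqrt (A^2 + B^2) ≠ 0 := by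
      rw [← habs]; simpa using hz0
    rw [hc, hs]
    show A * Real.cos t + B * Real.sin t =
      Real.sqrt (A^2+B^2) * (Real.cos t * (z.re / _) + Real.sin t * (z.im / _))
    have hre : z.re = A := rfl
    have him : z.im = B := rfl
    rw [hre, him]
    field_simp

lemma e1_lem (μ₁ σ₁ s c : ℝ) (hc : c ≠ 0) (hsc : s^2 + c^2 = 1) :
    ((μ₁ + σ₁ * (s/c)) - μ₁)^2 + σ₁^2 = σ₁^2 / c^2 := by
  field_simp
  linear_combination σ₁^2 * hsc

lemma e2_lem (μ₁ μ₂ σ₁ σ₂ s c : ℝ) (h₁ : σ₁ ≠ 0) (h₂ : σ₂ ≠ 0) (hc : c ≠ 0)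
    (hsc : s^2 + c^2 = 1) :
    ((μ₁ + σ₁ * (s/c)) - μ₂)^2 + σ₂^2 = (σ₁ * σ₂ / c^2) *
      ((1 + ((μ₂ - μ₁)^2 + (σ₂ - σ₁)^2)/(2*σ₁*σ₂))
        + ((μ₂ - μ₁)^2 + σ₂^2 - σ₁^2)/(2*σ₁*σ₂) * (c^2 - s^2)
        + (-(μ₂ - μ₁)/σ₂) * (2*s*c)) := by
  have key : (σ₁*s - (μ₂-μ₁)*c)^2 + σ₂^2*c^2 = σ₁*σ₂*
      ((1 + ((μ₂ - μ₁)^2 + (σ₂ - σ₁)^2)/(2*σ₁*σ₂))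
        + ((μ₂ - μ₁)^2 + σ₂^2 - σ₁^2)/(2*σ₁*σ₂) * (c^2 - s^2)
        + (-(μ₂ - μ₁)/σ₂) * (2*s*c)) := by
    field_simp
    linear_combination (((μ₂-μ₁)^2+σ₁^2+σ₂^2)) * hsc
  have hx : (μ₁ + σ₁*(s/c) - μ₂) = (σ₁*s - (μ₂-μ₁)*c)/c := by field_simp; ring
  rw [hx, div_pow, div_add' _ _ _ (pow_ne_zero 2 hc), key]
  ring

lemma ratio_calc (p σ₁ σ₂ c D : ℝ) (hp : p ≠ 0) (h₁ : σ₁ ≠ 0) (h₂ : σ₂ ≠ 0)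
    (hc : c ≠ 0) (hD : D ≠ 0) :
    (σ₂/p) * (1/((σ₁*σ₂/c^2)*D)) / ((σ₁/p) * (1/(σ₁^2/c^2))) = 1/D := by
  field_simp

lemma final_calc (p σ₁ c v w : ℝ) (hp : p ≠ 0) (h₁ : σ₁ ≠ 0) (hc : c ≠ 0) :
    σ₁ / c^2 * (v * (c^2 / (p * σ₁))) = 1/p * v := by
  field_simp

theorem cauchy_fDiv_formula (f : ℝ → ℝ) (hf : ContinuousOn f (Set.Ioi 0))
    (μ₁ μ₂ σ₁ σ₂ : ℝ) (h₁ : 0 < σ₁) (h₂ : 0 < σ₂)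
    (hInt : Integrable (fun x => f (cauchyPdf μ₂ σ₂ x / cauchyPdf μ₁ σ₁ x) * cauchyPdf μ₁ σ₁ x)) :
    ∫ x, f (cauchyPdf μ₂ σ₂ x / cauchyPdf μ₁ σ₁ x) * cauchyPdf μ₁ σ₁ x
      = (1 / Real.pi) * ∫ θ in (0 : ℝ)..Real.pi,
          f (1 / ((1 + ((μ₂ - μ₁) ^ 2 + (σ₂ - σ₁) ^ 2) / (2 * σ₁ * σ₂))
              + Real.sqrt ((1 + ((μ₂ - μ₁) ^ 2 + (σ₂ - σ₁) ^ 2) / (2 * σ₁ * σ₂)) ^ 2 - 1)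
                * Real.cos θ)) := by
  have hπ : (0:ℝ) < π := Real.pi_pos
  set ζ : ℝ := 1 + ((μ₂ - μ₁) ^ 2 + (σ₂ - σ₁) ^ 2) / (2 * σ₁ * σ₂) with hζdef
  set R : ℝ := Real.sqrt (ζ ^ 2 - 1) with hRdef
  set A : ℝ := ((μ₂ - μ₁)^2 + σ₂^2 - σ₁^2)/(2*σ₁*σ₂) with hAdef
  set B : ℝ := -(μ₂ - μ₁)/σ₂ with hBdef
  have hζ1 : 1 ≤ ζ := by
    rw [hζdef]
    nlinarith [sq_nonneg (μ₂ - μ₁), sq_nonneg (σ₂ - σ₁), mul_pos h₁ h₂,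
      div_nonneg (by positivity : (0:ℝ) ≤ (μ₂ - μ₁) ^ 2 + (σ₂ - σ₁) ^ 2)
        (by positivity : (0:ℝ) ≤ 2 * σ₁ * σ₂)]
  have hζsq : (0:ℝ) ≤ ζ^2 - 1 := by nlinarith
  have hAB : A^2 + B^2 = ζ^2 - 1 := by
    rw [hAdef, hBdef, hζdef]
    field_simp
    ring
  have hR0 : 0 ≤ R := Real.sqrt_nonneg _
  have hR2 : R^2 = ζ^2 - 1 := Real.sq_sqrt hζsq
  have hRζ : R < ζ := by nlinarith
  have hpos : ∀ t : ℝ, 0 < ζ + R * Real.cos t := by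
    intro t
    nlinarith [Real.neg_one_le_cos t, Real.cos_le_one t]
  obtain ⟨ψ, hψ⟩ := phase A B
  rw [hAB, ← hRdef] at hψ
  clear_value A B R ζ
  set h : ℝ → ℝ := fun u => f (1 / (ζ + R * Real.cos u)) with hhdef
  have hcont : Continuous h := by
    apply hf.comp_continuous
    · exact continuous_const.div (by continuity) (fun u => (hpos u).ne')
    · intro u
      exact mem_Ioi.mpr (one_div_pos.mpr (hpos u))
  -- the substitution map
  set T : ℝ → ℝ := fun φ => μ₁ + σ₁ * Real.tan φ with hTdef
  set g : ℝ → ℝ := fun x => f (cauchyPdf μ₂ σ₂ x / cauchyPdf μ₁ σ₁ x) * cauchyPdf μ₁ σ₁ x with hgdef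
  have himg : T '' Ioo (-(π/2)) (π/2) = univ := by
    have h1 : T '' Ioo (-(π/2)) (π/2) = (fun y => μ₁ + σ₁ * y) '' (Real.tan '' Ioo (-(π/2)) (π/2)) := by
      rw [Set.image_image]
    rw [h1, Real.image_tan_Ioo, Set.image_univ]
    apply Function.Surjective.range_eq
    intro y
    exact ⟨(y - μ₁)/σ₁, by field_simp; ring⟩
  have hderiv : ∀ φ ∈ Ioo (-(π/2)) (π/2),
      HasDerivWithinAt T (σ₁ * (1 / Real.cos φ ^ 2)) (Ioo (-(π/2)) (π/2)) φ := by
    intro φ hφ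
    have hcos : Real.cos φ ≠ 0 :=
      (Real.cos_pos_of_mem_Ioo hφ).ne'
    exact (((Real.hasDerivAt_tan hcos).const_mul σ₁).const_add μ₁).hasDerivWithinAt
  have hinj : InjOn T (Ioo (-(π/2)) (π/2)) := by
    intro a ha b hb hab
    apply Real.injOn_tan ha hb
    have : σ₁ * Real.tan a = σ₁ * Real.tan b := by
      have := hab
      simp only [hTdef] at this
      linarith
    exact mul_left_cancel₀ h₁.ne' this
  have step1 : ∫ x, g x = ∫ φ in Ioo (-(π/2)) (π/2), |σ₁ * (1 / Real.cos φ ^ 2)| • g (T φ) := by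
    rw [← setIntegral_univ, ← himg]
    exact integral_image_eq_integral_abs_deriv_smul measurableSet_Ioo hderiv hinj g
  clear hInt
  clear_value T g h
  have step2 : ∀ φ ∈ Ioo (-(π/2)) (π/2),
      |σ₁ * (1 / Real.cos φ ^ 2)| • g (T φ) = (1/π) * h (2*φ - ψ) := by
    intro φ hφ
    have hcpos : 0 < Real.cos φ := Real.cos_pos_of_mem_Ioo hφ
    have hc : Real.cos φ ≠ 0 := hcpos.ne'
    set s : ℝ := Real.sin φ with hsdef
    set c : ℝ := Real.cos φ with hcdef
    have hsc : s^2 + c^2 = 1 := Real.sin_sq_add_cos_sq φ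
    have htan : Real.tan φ = s / c := Real.tan_eq_sin_div_cos φ
    have hD : ζ + A * (c^2 - s^2) + B * (2*s*c) = ζ + R * Real.cos (2*φ - ψ) := by
      have h2c : c^2 - s^2 = Real.cos (2*φ) := by
        rw [Real.cos_two_mul, ← hcdef]; nlinarith
      have h2s : 2*s*c = Real.sin (2*φ) := by
        rw [Real.sin_two_mul, ← hsdef, ← hcdef]; try ring
      rw [h2c, h2s, add_assoc, hψ (2*φ)]
    have hDpos : 0 < ζ + A * (c^2 - s^2) + B * (2*s*c) := hD ▸ hpos (2*φ - ψ)
    clear_value s c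
    have hTφ : T φ = μ₁ + σ₁ * (s/c) := by simp only [hTdef, htan]
    have he1 := e1_lem μ₁ σ₁ s c hc hsc
    have he2 := e2_lem μ₁ μ₂ σ₁ σ₂ s c h₁.ne' h₂.ne' hc hsc
    rw [← hζdef, ← hAdef, ← hBdef] at he2
    have hratio : cauchyPdf μ₂ σ₂ (T φ) / cauchyPdf μ₁ σ₁ (T φ)
        = 1 / (ζ + A * (c^2 - s^2) + B * (2*s*c)) := by
      rw [hTφ]
      simp only [cauchyPdf]
      rw [he1, he2]
      exact ratio_calc π σ₁ σ₂ c _ Real.pi_ne_zero h₁.ne' h₂.ne' hc hDpos.ne'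
    have hp1 : cauchyPdf μ₁ σ₁ (T φ) = c^2 / (π * σ₁) := by
      rw [hTφ]
      simp only [cauchyPdf]
      rw [he1]
      field_simp
    have habs : |σ₁ * (1 / c ^ 2)| = σ₁ / c^2 := by
      rw [abs_of_pos (by positivity)]; ring
    have hgval : g (T φ) = f (cauchyPdf μ₂ σ₂ (T φ) / cauchyPdf μ₁ σ₁ (T φ))
        * cauchyPdf μ₁ σ₁ (T φ) := by rw [hgdef]
    have hhval : h (2*φ - ψ) = f (1 / (ζ + R * Real.cos (2*φ - ψ))) := by rw [hhdef]
    rw [smul_eq_mul, habs, hgval, hratio, hp1, hhval, ← hD]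
    exact final_calc π σ₁ c _ 0 Real.pi_ne_zero h₁.ne' hc
  have step3 : ∫ φ in Ioo (-(π/2)) (π/2), |σ₁ * (1 / Real.cos φ ^ 2)| • g (T φ)
      = ∫ φ in Ioo (-(π/2)) (π/2), (1/π) * h (2*φ - ψ) :=
    setIntegral_congr_fun measurableSet_Ioo step2
  -- convert to interval integral
  have hle : -(π/2) ≤ π/2 := by linarith
  have step4 : ∫ φ in Ioo (-(π/2)) (π/2), (1/π) * h (2*φ - ψ)
      = ∫ φ in (-(π/2))..(π/2), (1/π) * h (2*φ - ψ) := by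
    rw [intervalIntegral.integral_of_le hle, ← integral_Ioc_eq_integral_Ioo]
  have step5 : ∫ φ in (-(π/2))..(π/2), (1/π) * h (2*φ - ψ)
      = (1/π) * ∫ φ in (-(π/2))..(π/2), h (2*φ - ψ) :=
    intervalIntegral.integral_const_mul _ _
  have step6 : ∫ φ in (-(π/2))..(π/2), h (2*φ - ψ)
      = (2:ℝ)⁻¹ • ∫ u in (-π - ψ)..(π - ψ), h u := by
    have := intervalIntegral.integral_comp_mul_sub h (two_ne_zero) ψ
      (a := -(π/2)) (b := π/2)
    rw [this, show (2:ℝ) * -(π/2) - ψ = -π - ψ by ring,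
      show (2:ℝ) * (π/2) - ψ = π - ψ by ring]
  have hper : Function.Periodic h (2*π) := by
    intro u
    simp only [hhdef, Real.cos_add_two_pi]
  have step7 : ∫ u in (-π - ψ)..(π - ψ), h u = ∫ u in (-π)..π, h u := by
    have := hper.intervalIntegral_add_eq (-π - ψ) (-π)
    have e1 : -π - ψ + 2*π = π - ψ := by ring
    have e2 : -π + 2*π = π := by ring
    rw [e1, e2] at this
    exact this
  have hint : ∀ a b : ℝ, IntervalIntegrable h volume a b :=
    fun a b => hcont.intervalIntegrable a b
  have step8 : ∫ u in (-π)..π, h u = 2 * ∫ u in (0:ℝ)..π, h u := by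
    have hsplit : (∫ u in (-π)..(0:ℝ), h u) + ∫ u in (0:ℝ)..π, h u = ∫ u in (-π)..π, h u :=
      intervalIntegral.integral_add_adjacent_intervals (hint _ _) (hint _ _)
    have hneg : ∫ u in (-π)..(0:ℝ), h u = ∫ u in (0:ℝ)..π, h u := by
      have := intervalIntegral.integral_comp_neg h (a := 0) (b := π)
      have heq : ∀ x : ℝ, h (-x) = h x := by
        intro x; simp only [hhdef, Real.cos_neg]
      simp only [heq, neg_zero] at this
      exact this.symm
    linarith
  calc ∫ x, g x = (1/π) * ((2:ℝ)⁻¹ • ∫ u in (-π)..π, h u) := by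
        rw [step1, step3, step4, step5, step6, step7]
      _ = (1/π) * ∫ u in (0:ℝ)..π, h u := by
        rw [step8, smul_eq_mul]; ring
end

section
/- The f-divergence between two univariate Cauchy distributions is symmetric: D_f(p_{μ1,σ1} : p_{μ2,σ2}) = D_f(p_{μ2,σ2} : p_{μ1,σ1}) for every continuous f on (0,∞) for which the defining integrals exist. -/
open MeasureTheory

lemma cauchyPdf_pos {μ σ : ℝ} (h : 0 < σ) (x : ℝ) : 0 < cauchyPdf μ σ x := by
  unfold cauchyPdf
  have := Real.pi_pos
  positivity

/-- Key half-line change-of-variables lemma: the Möbius involution swapping the two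
Cauchy parameters maps one half-line (split at its pole) to the other and exchanges
the integrands. -/
lemma cauchy_fDiv_key (f : ℝ → ℝ) (μ₁ μ₂ σ₁ σ₂ : ℝ) (h₁ : 0 < σ₁) (h₂ : 0 < σ₂) :
    ∫ x in Set.Ioi ((μ₁ * σ₂ + μ₂ * σ₁) / (σ₁ + σ₂)),
        f (cauchyPdf μ₂ σ₂ x / cauchyPdf μ₁ σ₁ x) * cauchyPdf μ₁ σ₁ x
      = ∫ x in Set.Iio ((μ₁ * σ₂ + μ₂ * σ₁) / (σ₁ + σ₂)),
        f (cauchyPdf μ₁ σ₁ x / cauchyPdf μ₂ σ₂ x) * cauchyPdf μ₂ σ₂ x := by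
  have hc : 0 < σ₁ + σ₂ := by linarith
  set a := μ₁ * σ₂ + μ₂ * σ₁ with ha
  set c := σ₁ + σ₂ with hcdef
  set b := c * (μ₁ * μ₂ - σ₁ * σ₂) - a * (μ₁ + μ₂) with hb
  set D := σ₁ * σ₂ * ((μ₁ - μ₂) ^ 2 + (σ₁ + σ₂) ^ 2) with hD
  have hDpos : 0 < D := by
    have : (0:ℝ) < (μ₁ - μ₂) ^ 2 + (σ₁ + σ₂) ^ 2 := by nlinarith
    exact mul_pos (mul_pos h₁ h₂) this
  have hDeq : D = -a ^ 2 - b * c := by simp only [hD, hb, ha, hcdef]; ring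
  set g : ℝ → ℝ := fun x => (a * x + b) / (c * x - a) with hg
  set x₀ := a / c with hx0
  have hden : ∀ x : ℝ, x ≠ x₀ → c * x - a ≠ 0 := by
    intro x hx hcon
    exact hx ((eq_div_iff hc.ne').mpr (by linarith))
  have hgsub : ∀ x : ℝ, c * x - a ≠ 0 → g x - x₀ = -D / (c * (c * x - a)) := by
    intro x hx
    rw [hg, hx0, hDeq]
    have hx' : x * c - a ≠ 0 := by rwa [mul_comm x c]
    field_simp
    ring
  have hmaps₁ : ∀ x : ℝ, x < x₀ → x₀ < g x := by
    intro x hx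
    have hxne : c * x - a ≠ 0 := hden x (ne_of_lt hx)
    have hx' : x < a / c := by rw [hx0] at hx; exact hx
    have hneg : c * x - a < 0 := by
      have := (lt_div_iff₀ hc).mp hx'
      linarith [mul_comm c x]
    have hpos : 0 < -D / (c * (c * x - a)) :=
      div_pos_of_neg_of_neg (by linarith) (by nlinarith)
    have h5 : 0 < g x - x₀ := (hgsub x hxne).symm ▸ hpos
    linarith
  have hmaps₂ : ∀ x : ℝ, x₀ < x → g x < x₀ := by
    intro x hx
    have hxne : c * x - a ≠ 0 := hden x (ne_of_gt hx)
    have hx' : a / c < x := by rw [hx0] at hx; exact hx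
    have hposd : 0 < c * x - a := by
      have := (div_lt_iff₀ hc).mp hx'
      linarith [mul_comm c x]
    have hneg : -D / (c * (c * x - a)) < 0 :=
      div_neg_of_neg_of_pos (by linarith) (by positivity)
    have h5 : g x - x₀ < 0 := (hgsub x hxne).symm ▸ hneg
    linarith
  have hd2 : ∀ x : ℝ, c * x - a ≠ 0 → c * g x - a = -D / (c * x - a) := by
    intro x hx
    rw [hg, hDeq]
    field_simp
    ring
  have hn2 : ∀ x : ℝ, c * x - a ≠ 0 → a * g x + b = -D * x / (c * x - a) := by
    intro x hx
    rw [hg, hDeq]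
    have hx' : x * c - a ≠ 0 := by rwa [mul_comm x c]
    field_simp
    ring
  have hinv : ∀ x : ℝ, c * x - a ≠ 0 → g (g x) = x := by
    intro x hx
    have : g (g x) = (a * g x + b) / (c * g x - a) := rfl
    rw [this, hn2 x hx, hd2 x hx]
    have hDne : -D ≠ 0 := by simpa using hDpos.ne'
    have hx' : x * c - a ≠ 0 := by rwa [mul_comm x c]
    field_simp
  have hpd12 : ∀ x : ℝ, c * x - a ≠ 0 →
      cauchyPdf μ₂ σ₂ (g x) * (D / (c * x - a) ^ 2) = cauchyPdf μ₁ σ₁ x := by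
    intro x hx
    have k1 : ((a * x + b) / (c * x - a) - μ₂) ^ 2 + σ₂ ^ 2 ≠ 0 := by positivity
    have k2 : (x - μ₁) ^ 2 + σ₁ ^ 2 ≠ 0 := by positivity
    have hpi := Real.pi_ne_zero
    simp only [cauchyPdf, hg]
    have hx' : x * c - a ≠ 0 := by rwa [mul_comm x c]
    field_simp
    simp only [hD, hb, ha, hcdef]
    ring
  have hpd21 : ∀ x : ℝ, c * x - a ≠ 0 →
      cauchyPdf μ₁ σ₁ (g x) * (D / (c * x - a) ^ 2) = cauchyPdf μ₂ σ₂ x := by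
    intro x hx
    have k1 : ((a * x + b) / (c * x - a) - μ₁) ^ 2 + σ₁ ^ 2 ≠ 0 := by positivity
    have k2 : (x - μ₂) ^ 2 + σ₂ ^ 2 ≠ 0 := by positivity
    have hpi := Real.pi_ne_zero
    simp only [cauchyPdf, hg]
    have hx' : x * c - a ≠ 0 := by rwa [mul_comm x c]
    field_simp
    simp only [hD, hb, ha, hcdef]
    ring
  have hderiv : ∀ x ∈ Set.Iio x₀,
      HasDerivWithinAt g (D / (c * x - a) ^ 2) (Set.Iio x₀) x := by
    intro x hx
    have hxne : c * x - a ≠ 0 := hden x (ne_of_lt hx)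
    have hA : HasDerivAt (fun y : ℝ => a * y + b) a x := by
      simpa using ((hasDerivAt_id x).const_mul a).add_const b
    have hB : HasDerivAt (fun y : ℝ => c * y - a) c x := by
      simpa using ((hasDerivAt_id x).const_mul c).sub_const a
    have := hA.div hB hxne
    have heq : (a * (c * x - a) - (a * x + b) * c) / (c * x - a) ^ 2
        = D / (c * x - a) ^ 2 := by rw [hDeq]; ring
    rw [← heq]
    exact this.hasDerivWithinAt
  have hinj : Set.InjOn g (Set.Iio x₀) := by
    intro x hx y hy hxy
    calc x = g (g x) := (hinv x (hden x (ne_of_lt hx))).symm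
      _ = g (g y) := by rw [hxy]
      _ = y := hinv y (hden y (ne_of_lt hy))
  have himg : g '' Set.Iio x₀ = Set.Ioi x₀ := by
    ext y
    constructor
    · rintro ⟨x, hx, rfl⟩
      exact hmaps₁ x hx
    · intro hy
      exact ⟨g y, hmaps₂ y hy, hinv y (hden y (ne_of_gt hy))⟩
  rw [← himg,
    integral_image_eq_integral_abs_deriv_smul measurableSet_Iio hderiv hinj]
  apply setIntegral_congr_fun measurableSet_Iio
  intro x hx
  dsimp only
  have hxne : c * x - a ≠ 0 := hden x (ne_of_lt hx)
  have hw : 0 < D / (c * x - a) ^ 2 := by positivity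
  have e1 := hpd12 x hxne
  have e2 := hpd21 x hxne
  have hr : cauchyPdf μ₂ σ₂ (g x) / cauchyPdf μ₁ σ₁ (g x)
      = cauchyPdf μ₁ σ₁ x / cauchyPdf μ₂ σ₂ x := by
    rw [← e1, ← e2, mul_div_mul_right _ _ hw.ne']
  rw [smul_eq_mul, abs_of_pos hw, hr, ← e2]
  ring

theorem cauchy_fDiv_symm (f : ℝ → ℝ) (hf : ContinuousOn f (Set.Ioi 0))
    (μ₁ μ₂ σ₁ σ₂ : ℝ) (h₁ : 0 < σ₁) (h₂ : 0 < σ₂)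
    (hInt₁ : Integrable
      (fun x => f (cauchyPdf μ₂ σ₂ x / cauchyPdf μ₁ σ₁ x) * cauchyPdf μ₁ σ₁ x))
    (hInt₂ : Integrable
      (fun x => f (cauchyPdf μ₁ σ₁ x / cauchyPdf μ₂ σ₂ x) * cauchyPdf μ₂ σ₂ x)) :
    ∫ x, f (cauchyPdf μ₂ σ₂ x / cauchyPdf μ₁ σ₁ x) * cauchyPdf μ₁ σ₁ x
      = ∫ x, f (cauchyPdf μ₁ σ₁ x / cauchyPdf μ₂ σ₂ x) * cauchyPdf μ₂ σ₂ x := by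
  set x₀ := (μ₁ * σ₂ + μ₂ * σ₁) / (σ₁ + σ₂) with hx0
  have hx0' : (μ₂ * σ₁ + μ₁ * σ₂) / (σ₂ + σ₁) = x₀ := by rw [hx0]; ring_nf
  have k1 := cauchy_fDiv_key f μ₁ μ₂ σ₁ σ₂ h₁ h₂
  have k2 := cauchy_fDiv_key f μ₂ μ₁ σ₂ σ₁ h₂ h₁
  rw [hx0'] at k2
  have hIic1 : ∫ x in Set.Iic x₀,
      f (cauchyPdf μ₂ σ₂ x / cauchyPdf μ₁ σ₁ x) * cauchyPdf μ₁ σ₁ x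
      = ∫ x in Set.Iio x₀,
      f (cauchyPdf μ₂ σ₂ x / cauchyPdf μ₁ σ₁ x) * cauchyPdf μ₁ σ₁ x :=
    (setIntegral_congr_set Iio_ae_eq_Iic).symm
  have hIic2 : ∫ x in Set.Iic x₀,
      f (cauchyPdf μ₁ σ₁ x / cauchyPdf μ₂ σ₂ x) * cauchyPdf μ₂ σ₂ x
      = ∫ x in Set.Iio x₀,
      f (cauchyPdf μ₁ σ₁ x / cauchyPdf μ₂ σ₂ x) * cauchyPdf μ₂ σ₂ x :=
    (setIntegral_congr_set Iio_ae_eq_Iic).symm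
  have s1 := intervalIntegral.integral_Iic_add_Ioi (b := x₀) hInt₁.integrableOn hInt₁.integrableOn
  have s2 := intervalIntegral.integral_Iic_add_Ioi (b := x₀) hInt₂.integrableOn hInt₂.integrableOn
  rw [← s1, ← s2, hIic1, hIic2, k1, ← k2]
  ring
end

section
/- Define h(t) = (1/π)∫_0^π f(1/(cosh t + sinh t · cos θ)) dθ for t ≥ 0, where f is convex on (0,∞), f(1)=0, f is C² near 1, and f''(1) > 0. Then h(t) → 0, h'(t) → 0, and h''(t) → f''(1)/2 as t → 0+. -/
open Real Set Filter MeasureTheory intervalIntegral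

noncomputable def Aa (t θ : ℝ) : ℝ := Real.cosh t + Real.sinh t * Real.cos θ
noncomputable def Bb (t θ : ℝ) : ℝ := Real.sinh t + Real.cosh t * Real.cos θ
noncomputable def Xx (t θ : ℝ) : ℝ := (Aa t θ)⁻¹
noncomputable def Xt (t θ : ℝ) : ℝ := -Bb t θ / Aa t θ ^ 2
noncomputable def Xtt (t θ : ℝ) : ℝ := 2 * Bb t θ ^ 2 / Aa t θ ^ 3 - 1 / Aa t θ

lemma Aa_lb (t θ : ℝ) : Real.exp (-|t|) ≤ Aa t θ := by
  have h1 : |Real.sinh t * Real.cos θ| ≤ |Real.sinh t| := by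
    rw [abs_mul]
    exact mul_le_of_le_one_right (abs_nonneg _) (Real.abs_cos_le_one θ)
  have h2 : Real.exp (-|t|) = Real.cosh t - |Real.sinh t| := by
    rw [Real.abs_sinh, ← Real.cosh_abs t, Real.cosh_sub_sinh]
  have h3 := neg_abs_le (Real.sinh t * Real.cos θ)
  simp only [Aa]
  linarith

lemma Aa_pos (t θ : ℝ) : 0 < Aa t θ := lt_of_lt_of_le (Real.exp_pos _) (Aa_lb t θ)

lemma Aa_ub (t θ : ℝ) : Aa t θ ≤ Real.exp |t| := by
  have h1 : |Real.sinh t * Real.cos θ| ≤ |Real.sinh t| := by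
    rw [abs_mul]
    exact mul_le_of_le_one_right (abs_nonneg _) (Real.abs_cos_le_one θ)
  have h2 : Real.exp |t| = Real.cosh t + |Real.sinh t| := by
    rw [Real.abs_sinh, ← Real.cosh_abs t, Real.cosh_add_sinh]
  have h3 := le_abs_self (Real.sinh t * Real.cos θ)
  simp only [Aa]
  linarith

lemma Bb_abs (t θ : ℝ) : |Bb t θ| ≤ Real.exp |t| := by
  have h1 : |Real.cosh t * Real.cos θ| ≤ Real.cosh t := by
    rw [abs_mul, abs_of_pos (Real.cosh_pos t)]
    exact mul_le_of_le_one_right (Real.cosh_pos t).le (Real.abs_cos_le_one θ)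
  have h2 : Real.exp |t| = Real.cosh t + |Real.sinh t| := by
    rw [Real.abs_sinh, ← Real.cosh_abs t, Real.cosh_add_sinh]
  calc |Bb t θ| ≤ |Real.sinh t| + |Real.cosh t * Real.cos θ| := abs_add_le _ _
    _ ≤ Real.exp |t| := by linarith

lemma Xx_mem (t θ : ℝ) : Xx t θ ∈ Icc (Real.exp (-|t|)) (Real.exp |t|) := by
  constructor
  · calc Real.exp (-|t|) = (Real.exp |t|)⁻¹ := by rw [Real.exp_neg]
      _ ≤ (Aa t θ)⁻¹ := inv_anti₀ (Aa_pos t θ) (Aa_ub t θ)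
  · calc (Aa t θ)⁻¹ ≤ (Real.exp (-|t|))⁻¹ := inv_anti₀ (Real.exp_pos _) (Aa_lb t θ)
      _ = Real.exp |t| := by rw [Real.exp_neg, inv_inv]

lemma Aa_hasDeriv (θ t : ℝ) : HasDerivAt (fun s => Aa s θ) (Bb t θ) t := by
  exact (Real.hasDerivAt_cosh t).add ((Real.hasDerivAt_sinh t).mul_const (Real.cos θ))

lemma Bb_hasDeriv (θ t : ℝ) : HasDerivAt (fun s => Bb s θ) (Aa t θ) t := by
  exact (Real.hasDerivAt_sinh t).add ((Real.hasDerivAt_cosh t).mul_const (Real.cos θ))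

lemma Xx_hasDeriv (θ t : ℝ) : HasDerivAt (fun s => Xx s θ) (Xt t θ) t := by
  exact (Aa_hasDeriv θ t).inv (Aa_pos t θ).ne'

lemma Xt_hasDeriv (θ t : ℝ) : HasDerivAt (fun s => Xt s θ) (Xtt t θ) t := by
  have hpow : HasDerivAt (fun s => Aa s θ ^ 2) ((2 : ℕ) * Aa t θ ^ 1 * Bb t θ) t :=
    (Aa_hasDeriv θ t).pow 2
  have hdiv := ((Bb_hasDeriv θ t).neg).div hpow (pow_ne_zero 2 (Aa_pos t θ).ne')
  refine HasDerivAt.congr_deriv hdiv ?_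
  have hA := (Aa_pos t θ).ne'
  simp only [Xtt, Pi.neg_apply]
  field_simp
  ring

lemma Aa_cont : Continuous (fun p : ℝ × ℝ => Aa p.1 p.2) := by
  unfold Aa; fun_prop

lemma Bb_cont : Continuous (fun p : ℝ × ℝ => Bb p.1 p.2) := by
  unfold Bb; fun_prop

lemma Xx_cont : Continuous (fun p : ℝ × ℝ => Xx p.1 p.2) :=
  Aa_cont.inv₀ (fun p => (Aa_pos p.1 p.2).ne')

lemma Xt_cont : Continuous (fun p : ℝ × ℝ => Xt p.1 p.2) :=
  (Bb_cont.neg).div (Aa_cont.pow 2) (fun p => pow_ne_zero 2 (Aa_pos p.1 p.2).ne')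

lemma Xtt_cont : Continuous (fun p : ℝ × ℝ => Xtt p.1 p.2) :=
  ((continuous_const.mul (Bb_cont.pow 2)).div (Aa_cont.pow 3)
    (fun p => pow_ne_zero 3 (Aa_pos p.1 p.2).ne')).sub
    (continuous_const.div Aa_cont (fun p => (Aa_pos p.1 p.2).ne'))

lemma Aa_zero (θ : ℝ) : Aa 0 θ = 1 := by simp [Aa]
lemma Xx_zero (θ : ℝ) : Xx 0 θ = 1 := by simp [Xx, Aa_zero]
lemma Xt_zero (θ : ℝ) : Xt 0 θ = -Real.cos θ := by simp [Xt, Bb, Aa_zero]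
lemma Xtt_zero (θ : ℝ) : Xtt 0 θ = 2 * Real.cos θ ^ 2 - 1 := by simp [Xtt, Bb, Aa_zero]

noncomputable def hDiv (f : ℝ → ℝ) (t : ℝ) : ℝ :=
  (1 / Real.pi) * ∫ θ in (0 : ℝ)..Real.pi,
    f (1 / (Real.cosh t + Real.sinh t * Real.cos θ))

theorem hDiv_asymptotics (f : ℝ → ℝ) (hconv : ConvexOn ℝ (Set.Ioi 0) f) (hf1 : f 1 = 0)
    (hC2 : ∃ ε > (0 : ℝ), ContDiffOn ℝ 2 f (Set.Ioo (1 - ε) (1 + ε)))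
    (hf'' : 0 < deriv (deriv f) 1) :
    Filter.Tendsto (hDiv f) (nhdsWithin 0 (Set.Ioi 0)) (nhds 0) ∧
    Filter.Tendsto (deriv (hDiv f)) (nhdsWithin 0 (Set.Ioi 0)) (nhds 0) ∧
    Filter.Tendsto (deriv (deriv (hDiv f))) (nhdsWithin 0 (Set.Ioi 0))
      (nhds (deriv (deriv f) 1 / 2)) := by
  classical
  obtain ⟨ε, hε, hC2⟩ := hC2
  have hπ : (0:ℝ) < Real.pi := Real.pi_pos
  set S : Set ℝ := Set.Ioo (1 - ε) (1 + ε) with hS_def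
  have hSopen : IsOpen S := isOpen_Ioo
  -- clamping function
  set c : ℝ → ℝ := fun y => max (1 - ε/2) (min (1 + ε/2) y) with hc_def
  have hc_cont : Continuous c := by
    exact continuous_const.max (continuous_const.min continuous_id)
  have hc_mem : ∀ y, c y ∈ Set.Icc (1 - ε/2) (1 + ε/2) :=
    fun y => ⟨le_max_left _ _, max_le (by linarith) (min_le_left _ _)⟩
  have hIccS : Set.Icc (1 - ε/2) (1 + ε/2) ⊆ S :=
    fun y hy => ⟨by linarith [hy.1], by linarith [hy.2]⟩
  have hc_eq : ∀ y ∈ Set.Icc (1 - ε/2) (1 + ε/2), c y = y := by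
    intro y hy
    simp only [hc_def, min_eq_right hy.2, max_eq_right hy.1]
  -- smoothness facts
  have hdf : DifferentiableOn ℝ f S := hC2.differentiableOn (by norm_num)
  have hd' : ContDiffOn ℝ 1 (deriv f) S := hC2.deriv_of_isOpen hSopen (by norm_num)
  have hdf' : DifferentiableOn ℝ (deriv f) S := hd'.differentiableOn one_ne_zero
  have hcont'' : ContinuousOn (deriv (deriv f)) S :=
    (hd'.deriv_of_isOpen (m := 0) hSopen (by norm_num)).continuousOn
  have hf_d1 : ∀ y ∈ S, HasDerivAt f (deriv f y) y := fun y hy =>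
    (hdf.differentiableAt (hSopen.mem_nhds hy)).hasDerivAt
  have hf_d2 : ∀ y ∈ S, HasDerivAt (deriv f) (deriv (deriv f) y) y := fun y hy =>
    (hdf'.differentiableAt (hSopen.mem_nhds hy)).hasDerivAt
  -- globalized functions
  set g0 : ℝ → ℝ := fun y => f (c y) with hg0_def
  set g1 : ℝ → ℝ := fun y => deriv f (c y) with hg1_def
  set g2 : ℝ → ℝ := fun y => deriv (deriv f) (c y) with hg2_def
  have hg0c : Continuous g0 :=
    hC2.continuousOn.comp_continuous hc_cont (fun y => hIccS (hc_mem y))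
  have hg1c : Continuous g1 :=
    hd'.continuousOn.comp_continuous hc_cont (fun y => hIccS (hc_mem y))
  have hg2c : Continuous g2 :=
    hcont''.comp_continuous hc_cont (fun y => hIccS (hc_mem y))
  -- the small radius δ
  set δ : ℝ := Real.log (1 + ε/2) with hδ_def
  have hδpos : 0 < δ := Real.log_pos (by linarith)
  have hexpδ : Real.exp δ = 1 + ε/2 := Real.exp_log (by linarith)
  have h2ε : (0:ℝ) < 1 + ε/2 := by linarith
  have hexpnegδ : 1 - ε/2 ≤ Real.exp (-δ) := by
    rw [Real.exp_neg, hexpδ, ← one_div]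
    calc 1 - ε/2 = ((1 - ε/2) * (1 + ε/2)) / (1 + ε/2) := by field_simp
      _ ≤ 1 / (1 + ε/2) := by
          gcongr
          nlinarith
  -- membership of X values
  have hXmem : ∀ t θ, |t| ≤ δ → Xx t θ ∈ Set.Icc (1 - ε/2) (1 + ε/2) := by
    intro t θ ht
    obtain ⟨hl, hu⟩ := Xx_mem t θ
    constructor
    · refine le_trans ?_ hl
      refine le_trans hexpnegδ (Real.exp_le_exp.mpr ?_)
      linarith
    · refine le_trans hu ?_
      rw [← hexpδ]
      exact Real.exp_le_exp.mpr ht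
  have hXS : ∀ t θ, |t| ≤ δ → Xx t θ ∈ S := fun t θ ht => hIccS (hXmem t θ ht)
  -- the three integrand families
  set G0 : ℝ → ℝ → ℝ := fun t θ => g0 (Xx t θ) with hG0_def
  set G1 : ℝ → ℝ → ℝ := fun t θ => g1 (Xx t θ) * Xt t θ with hG1_def
  set G2 : ℝ → ℝ → ℝ := fun t θ =>
    g2 (Xx t θ) * Xt t θ * Xt t θ + g1 (Xx t θ) * Xtt t θ with hG2_def
  have hG0c : Continuous (fun p : ℝ × ℝ => G0 p.1 p.2) := hg0c.comp Xx_cont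
  have hG1c : Continuous (fun p : ℝ × ℝ => G1 p.1 p.2) :=
    (hg1c.comp Xx_cont).mul Xt_cont
  have hG2c : Continuous (fun p : ℝ × ℝ => G2 p.1 p.2) :=
    (((hg2c.comp Xx_cont).mul Xt_cont).mul Xt_cont).add ((hg1c.comp Xx_cont).mul Xtt_cont)
  -- pointwise (in θ) derivatives of the integrands on |t| < δ
  have hball : ∀ t : ℝ, |t| < δ → Set.Ioo (-δ) δ ∈ nhds t := by
    intro t ht
    exact isOpen_Ioo.mem_nhds (abs_lt.mp ht)
  have hG0_deriv : ∀ θ t, |t| < δ → HasDerivAt (fun s => G0 s θ) (G1 t θ) t := by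
    intro θ t ht
    have hmem := hXmem t θ ht.le
    have h1 : HasDerivAt (fun s => f (Xx s θ)) (deriv f (Xx t θ) * Xt t θ) t :=
      (hf_d1 _ (hIccS hmem)).comp t (Xx_hasDeriv θ t)
    have h2 : HasDerivAt (fun s => G0 s θ) (deriv f (Xx t θ) * Xt t θ) t := by
      apply h1.congr_of_eventuallyEq
      filter_upwards [hball t ht] with u hu
      simp only [hG0_def, hg0_def, hc_eq _ (hXmem u θ (abs_lt.mpr hu).le)]
    simpa only [hG1_def, hg1_def, hc_eq _ hmem] using h2
  have hG1_deriv : ∀ θ t, |t| < δ → HasDerivAt (fun s => G1 s θ) (G2 t θ) t := by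
    intro θ t ht
    have hmem := hXmem t θ ht.le
    have h1 : HasDerivAt (fun s => deriv f (Xx s θ) * Xt s θ)
        (deriv (deriv f) (Xx t θ) * Xt t θ * Xt t θ + deriv f (Xx t θ) * Xtt t θ) t := by
      have := ((hf_d2 _ (hIccS hmem)).comp t (Xx_hasDeriv θ t)).mul (Xt_hasDeriv θ t)
      exact this
    have h2 : HasDerivAt (fun s => G1 s θ)
        (deriv (deriv f) (Xx t θ) * Xt t θ * Xt t θ + deriv f (Xx t θ) * Xtt t θ) t := by
      apply h1.congr_of_eventuallyEq
      filter_upwards [hball t ht] with u hu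
      simp only [hG1_def, hg1_def, hc_eq _ (hXmem u θ (abs_lt.mpr hu).le)]
    simpa only [hG2_def, hg1_def, hg2_def, hc_eq _ hmem] using h2
  -- differentiation under the integral sign
  have key : ∀ (G G' : ℝ → ℝ → ℝ), Continuous (fun p : ℝ × ℝ => G p.1 p.2) →
      Continuous (fun p : ℝ × ℝ => G' p.1 p.2) →
      (∀ θ t, |t| < δ → HasDerivAt (fun s => G s θ) (G' t θ) t) →
      ∀ t₀, |t₀| < δ →
        HasDerivAt (fun s => (1 / Real.pi) * ∫ θ in (0:ℝ)..Real.pi, G s θ)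
          ((1 / Real.pi) * ∫ θ in (0:ℝ)..Real.pi, G' t₀ θ) t₀ := by
    intro G G' hGc hG'c hder t₀ ht₀
    obtain ⟨C, hC⟩ := (IsCompact.prod isCompact_Icc isCompact_Icc :
      IsCompact (Set.Icc (-δ) δ ×ˢ Set.Icc 0 Real.pi)).exists_bound_of_continuousOn
      hG'c.continuousOn
    have hrpos : 0 < δ - |t₀| := by linarith
    have habs : ∀ s : ℝ, s ∈ Metric.ball t₀ (δ - |t₀|) → |s| < δ := by
      intro s hs
      have : |s - t₀| < δ - |t₀| := by simpa [Real.dist_eq] using hs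
      calc |s| = |s - t₀ + t₀| := by ring_nf
        _ ≤ |s - t₀| + |t₀| := abs_add_le _ _
        _ < δ := by linarith
    have main := intervalIntegral.hasDerivAt_integral_of_dominated_loc_of_deriv_le
      (F := G) (F' := G') (bound := fun _ => C) (a := 0) (b := Real.pi) (μ := volume)
      (x₀ := t₀) (Metric.ball_mem_nhds t₀ hrpos) ?_ ?_ ?_ ?_ ?_ ?_
    · exact main.2.const_mul (1 / Real.pi)
    · exact Filter.Eventually.of_forall fun s =>
        ((hGc.comp (Continuous.prodMk_right s)).aestronglyMeasurable)
    · exact (hGc.comp (Continuous.prodMk_right t₀)).intervalIntegrable 0 Real.pi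
    · exact (hG'c.comp (Continuous.prodMk_right t₀)).aestronglyMeasurable
    · apply Filter.Eventually.of_forall
      intro θ hθ s hs
      have hθ' : θ ∈ Set.Icc 0 Real.pi := by
        have : θ ∈ Set.Ioc 0 Real.pi := by
          simpa [Set.uIoc_of_le hπ.le] using hθ
        exact ⟨this.1.le, this.2⟩
      exact hC (s, θ) (Set.mk_mem_prod ⟨by linarith [(abs_lt.mp (habs s hs)).1],
        (abs_lt.mp (habs s hs)).2.le⟩ hθ')
    · exact intervalIntegrable_const
    · exact Filter.Eventually.of_forall fun θ _ s hs => hder θ s (habs s hs)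
  -- the three averaged functions
  set H0 : ℝ → ℝ := fun t => (1 / Real.pi) * ∫ θ in (0:ℝ)..Real.pi, G0 t θ with hH0_def
  set H1 : ℝ → ℝ := fun t => (1 / Real.pi) * ∫ θ in (0:ℝ)..Real.pi, G1 t θ with hH1_def
  set H2 : ℝ → ℝ := fun t => (1 / Real.pi) * ∫ θ in (0:ℝ)..Real.pi, G2 t θ with hH2_def
  have hH0d : ∀ t, |t| < δ → HasDerivAt H0 (H1 t) t := fun t ht =>
    key G0 G1 hG0c hG1c hG0_deriv t ht
  have hH1d : ∀ t, |t| < δ → HasDerivAt H1 (H2 t) t := fun t ht =>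
    key G1 G2 hG1c hG2c hG1_deriv t ht
  -- hDiv agrees with H0 near 0
  have hDiv_eq : ∀ t, |t| ≤ δ → hDiv f t = H0 t := by
    intro t ht
    simp only [hDiv, hH0_def]
    congr 1
    apply intervalIntegral.integral_congr
    intro θ _
    show f (1 / (Real.cosh t + Real.sinh t * Real.cos θ)) = G0 t θ
    have : (1 : ℝ) / (Real.cosh t + Real.sinh t * Real.cos θ) = Xx t θ := by
      rw [Xx, Aa, one_div]
    rw [this]
    simp only [hG0_def, hg0_def, hc_eq _ (hXmem t θ ht)]
  have hIoo_nhds : Set.Ioo (-δ) δ ∈ nhds (0:ℝ) :=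
    isOpen_Ioo.mem_nhds (by constructor <;> simpa using hδpos)
  have habsIoo : ∀ t : ℝ, t ∈ Set.Ioo (-δ) δ → |t| < δ := fun t ht => abs_lt.mpr ht
  -- eventual equalities for the derivatives
  have E0 : hDiv f =ᶠ[nhds (0:ℝ)] H0 := by
    filter_upwards [hIoo_nhds] with t ht
    exact hDiv_eq t (habsIoo t ht).le
  have E1 : deriv (hDiv f) =ᶠ[nhds (0:ℝ)] H1 := by
    filter_upwards [hIoo_nhds] with t ht
    have e : hDiv f =ᶠ[nhds t] H0 := by
      filter_upwards [isOpen_Ioo.mem_nhds ht] with u hu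
      exact hDiv_eq u (habsIoo u hu).le
    rw [e.deriv_eq]
    exact (hH0d t (habsIoo t ht)).deriv
  have E2 : deriv (deriv (hDiv f)) =ᶠ[nhds (0:ℝ)] H2 := by
    filter_upwards [hIoo_nhds] with t ht
    have e : deriv (hDiv f) =ᶠ[nhds t] H1 := by
      filter_upwards [isOpen_Ioo.mem_nhds ht] with u hu
      have e' : hDiv f =ᶠ[nhds u] H0 := by
        filter_upwards [isOpen_Ioo.mem_nhds hu] with v hv
        exact hDiv_eq v (habsIoo v hv).le
      rw [e'.deriv_eq]
      exact (hH0d u (habsIoo u hu)).deriv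
    rw [e.deriv_eq]
    exact (hH1d t (habsIoo t ht)).deriv
  -- continuity of the H's
  have hH0cont : Continuous H0 := by
    apply continuous_const.mul
    exact intervalIntegral.continuous_parametric_intervalIntegral_of_continuous'
      (f := G0) (μ := volume) (by exact hG0c) 0 Real.pi
  have hH1cont : Continuous H1 := by
    apply continuous_const.mul
    exact intervalIntegral.continuous_parametric_intervalIntegral_of_continuous'
      (f := G1) (μ := volume) (by exact hG1c) 0 Real.pi
  have hH2cont : Continuous H2 := by
    apply continuous_const.mul
    exact intervalIntegral.continuous_parametric_intervalIntegral_of_continuous'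
      (f := G2) (μ := volume) (by exact hG2c) 0 Real.pi
  -- values at 0
  have h1mem : (1:ℝ) ∈ Set.Icc (1 - ε/2) (1 + ε/2) := ⟨by linarith, by linarith⟩
  have hH0_0 : H0 0 = 0 := by
    simp only [hH0_def, hG0_def, hg0_def, Xx_zero, hc_eq _ h1mem, hf1,
      intervalIntegral.integral_const, smul_zero, mul_zero]
  have hH1_0 : H1 0 = 0 := by
    have : (∫ θ in (0:ℝ)..Real.pi, G1 0 θ) = 0 := by
      have : ∀ θ : ℝ, G1 0 θ = g1 1 * -Real.cos θ := by
        intro θ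
        simp only [hG1_def, Xx_zero, Xt_zero]
      rw [intervalIntegral.integral_congr (fun θ _ => this θ),
        intervalIntegral.integral_const_mul, intervalIntegral.integral_neg,
        integral_cos]
      simp
    rw [hH1_def]
    simp [this]
  have hH2_0 : H2 0 = deriv (deriv f) 1 / 2 := by
    have hint : (∫ θ in (0:ℝ)..Real.pi, G2 0 θ)
        = g2 1 * (Real.pi / 2) + g1 1 * 0 := by
      have heq : ∀ θ : ℝ, G2 0 θ =
          g2 1 * Real.cos θ ^ 2 + g1 1 * (2 * Real.cos θ ^ 2 - 1) := by
        intro θ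
        simp only [hG2_def, Xx_zero, Xt_zero, Xtt_zero]
        ring
      rw [intervalIntegral.integral_congr (fun θ _ => heq θ)]
      rw [intervalIntegral.integral_add, intervalIntegral.integral_const_mul,
        intervalIntegral.integral_const_mul]
      · congr 1
        · congr 1
          rw [integral_cos_sq]
          simp [Real.sin_pi, Real.cos_pi]
        · congr 1
          rw [intervalIntegral.integral_sub, intervalIntegral.integral_const_mul,
            integral_cos_sq, intervalIntegral.integral_const]
          · simp [Real.sin_pi, Real.cos_pi]
            ring_nf
          · exact (continuous_const.mul ((Real.continuous_cos).pow 2)).intervalIntegrable 0 Real.pi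
          · exact intervalIntegrable_const
      · exact (continuous_const.mul ((Real.continuous_cos).pow 2)).intervalIntegrable 0 Real.pi
      · exact (continuous_const.mul ((continuous_const.mul ((Real.continuous_cos).pow 2)).sub
          continuous_const)).intervalIntegrable 0 Real.pi
    rw [hH2_def]
    simp only [hint, hg2_def, hc_eq _ h1mem, mul_zero, add_zero]
    field_simp
  -- conclusion
  have hle : nhdsWithin (0:ℝ) (Set.Ioi 0) ≤ nhds 0 := nhdsWithin_le_nhds
  refine ⟨?_, ?_, ?_⟩
  · exact Filter.Tendsto.congr' (E0.filter_mono hle).symm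
      (by have h := (hH0cont.tendsto 0).mono_left hle; rwa [hH0_0] at h)
  · exact Filter.Tendsto.congr' (E1.filter_mono hle).symm
      (by have h := (hH1cont.tendsto 0).mono_left hle; rwa [hH1_0] at h)
  · exact Filter.Tendsto.congr' (E2.filter_mono hle).symm
      (by have h := (hH2cont.tendsto 0).mono_left hle; rwa [hH2_0] at h)
end

section
/- With h(t) = (1/π)∫_0^π f(1/(cosh t + sinh t · cos θ)) dθ and f convex on (0,∞), f(1)=0, f C² near 1, f''(1)>0, we have lim_{t→0+} h(2t)/h(t) = 4. -/
open Real

lemma upos (t θ : ℝ) : 0 < Real.cosh t + Real.sinh t * Real.cos θ := by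
  have h1 := Real.cosh_sub_sinh t
  have h2 := Real.cosh_add_sinh t
  have e1 : 0 < Real.exp (-t) := Real.exp_pos _
  have e2 : 0 < Real.exp t := Real.exp_pos _
  have c1 := Real.neg_one_le_cos θ
  have c2 := Real.cos_le_one θ
  nlinarith [mul_nonneg e1.le (by linarith : (0:ℝ) ≤ 1 - Real.cos θ),
    mul_nonneg e2.le (by linarith : (0:ℝ) ≤ 1 + Real.cos θ)]

lemma Dpos (t θ : ℝ) : 0 < Real.cosh t + 1 + Real.sinh t * Real.cos θ := by
  have := upos t θ; linarith

noncomputable def Fa (t θ : ℝ) : ℝ :=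
  θ - 2 * Real.arctan (Real.sinh t * Real.sin θ / (Real.cosh t + 1 + Real.sinh t * Real.cos θ))

lemma hasDerivAt_Fa (t θ : ℝ) :
    HasDerivAt (Fa t) (1 / (Real.cosh t + Real.sinh t * Real.cos θ)) θ := by
  set a := Real.cosh t with ha
  set b := Real.sinh t with hb
  have hD : (0:ℝ) < a + 1 + b * Real.cos θ := Dpos t θ
  have hu : (0:ℝ) < a + b * Real.cos θ := upos t θ
  have hnum : HasDerivAt (fun x => b * Real.sin x) (b * Real.cos θ) θ :=
    (Real.hasDerivAt_sin θ).const_mul b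
  have hden : HasDerivAt (fun x => a + 1 + b * Real.cos x) (b * -Real.sin θ) θ :=
    ((Real.hasDerivAt_cos θ).const_mul b).const_add (a + 1)
  have hquot := hnum.div hden hD.ne'
  have harct := (Real.hasDerivAt_arctan _).comp θ hquot
  have hId : HasDerivAt (fun x : ℝ => x) 1 θ := hasDerivAt_id θ
  have h := hId.sub (harct.const_mul 2)
  convert h using 1
  · rfl
  · rfl
  · rfl
  have hab : a ^ 2 - b ^ 2 = 1 := Real.cosh_sq_sub_sinh_sq t
  have hsc : Real.sin θ ^ 2 + Real.cos θ ^ 2 = 1 := Real.sin_sq_add_cos_sq θ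
  set s := Real.sin θ
  set c := Real.cos θ
  have hDN : (a + 1 + b*c)^2 + (b*s)^2 = 2*(a+1)*(a+b*c) := by
    linear_combination (b:ℝ)^2 * hsc - hab
  have h2 : 1 + (b*s/(a+1+b*c))^2 = 2*(a+1)*(a+b*c)/(a+1+b*c)^2 := by
    rw [div_pow]
    field_simp
    linear_combination hDN
  show 1 / (a + b*c) = 1 - 2 * (1 / (1 + (b*s/(a+1+b*c))^2) * ((b*c*(a+1+b*c) - b*s*(b*-s))/(a+1+b*c)^2))
  rw [h2, one_div_div]
  have e1 : (a+1+b*c)^2/(2*(a+1)*(a+b*c)) * ((b*c*(a+1+b*c) - b*s*(b*-s))/(a+1+b*c)^2)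
      = (b*c*(a+1+b*c) + b^2*s^2)/(2*(a+1)*(a+b*c)) := by
    rw [div_mul_div_comm]
    rw [div_eq_div_iff (by positivity) (by positivity)]
    ring
  rw [e1]
  rw [div_eq_iff hu.ne', sub_mul]
  have ha1 : a + 1 ≠ 0 := by have := Real.cosh_pos t; linarith
  field_simp
  linear_combination (b:ℝ)^2*hsc - hab

lemma cont_u (t : ℝ) : Continuous fun θ : ℝ => Real.cosh t + Real.sinh t * Real.cos θ := by
  continuity

lemma integral_one_div_u (t : ℝ) :
    ∫ θ in (0:ℝ)..Real.pi, 1/(Real.cosh t + Real.sinh t * Real.cos θ) = Real.pi := by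
  have hcont : Continuous fun θ : ℝ => 1/(Real.cosh t + Real.sinh t * Real.cos θ) :=
    Continuous.div continuous_const (cont_u t) fun θ => (upos t θ).ne'
  rw [intervalIntegral.integral_eq_sub_of_hasDerivAt (fun θ _ => hasDerivAt_Fa t θ)
    (hcont.intervalIntegrable _ _)]
  simp [Fa, Real.sin_pi]

noncomputable def Ga (t θ : ℝ) : ℝ :=
  Real.cosh t * Fa t θ - Real.sinh t * Real.sin θ / (Real.cosh t + Real.sinh t * Real.cos θ)

lemma hasDerivAt_Ga (t θ : ℝ) :
    HasDerivAt (Ga t) (1/(Real.cosh t + Real.sinh t * Real.cos θ)^2) θ := by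
  set a := Real.cosh t with ha
  set b := Real.sinh t with hb
  have hu : (0:ℝ) < a + b * Real.cos θ := upos t θ
  have hnum : HasDerivAt (fun x => b * Real.sin x) (b * Real.cos θ) θ :=
    (Real.hasDerivAt_sin θ).const_mul b
  have hden : HasDerivAt (fun x => a + b * Real.cos x) (b * -Real.sin θ) θ :=
    ((Real.hasDerivAt_cos θ).const_mul b).const_add a
  have hquot := hnum.div hden hu.ne'
  have h := ((hasDerivAt_Fa t θ).const_mul a).sub hquot
  convert h using 1
  · rfl
  · rfl
  · rfl
  have hab : a ^ 2 - b ^ 2 = 1 := Real.cosh_sq_sub_sinh_sq t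
  have hsc : Real.sin θ ^ 2 + Real.cos θ ^ 2 = 1 := Real.sin_sq_add_cos_sq θ
  set s := Real.sin θ
  set c := Real.cos θ
  have e1 : a*(1/(a+b*c)) - (b*c*(a+b*c) - b*s*(b*-s))/(a+b*c)^2
      = (a*(a+b*c) - (b*c*(a+b*c)+b^2*s^2))/(a+b*c)^2 := by
    field_simp
    ring
  rw [e1]
  have e2 : a*(a+b*c) - (b*c*(a+b*c)+b^2*s^2) = 1 := by
    linear_combination hab - (b:ℝ)^2*hsc
  rw [e2]

lemma integral_one_div_u_sq (t : ℝ) :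
    ∫ θ in (0:ℝ)..Real.pi, 1/(Real.cosh t + Real.sinh t * Real.cos θ)^2
      = Real.pi * Real.cosh t := by
  have hcont : Continuous fun θ : ℝ => 1/(Real.cosh t + Real.sinh t * Real.cos θ)^2 :=
    Continuous.div continuous_const (by fun_prop) fun θ => (pow_pos (upos t θ) 2).ne'
  rw [intervalIntegral.integral_eq_sub_of_hasDerivAt (fun θ _ => hasDerivAt_Ga t θ)
    (hcont.intervalIntegrable _ _)]
  simp [Ga, Fa, Real.sin_pi]
  ring

lemma integrable_u_pow (t x y : ℝ) (n : ℕ) :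
    IntervalIntegrable (fun θ => 1/(Real.cosh t + Real.sinh t * Real.cos θ)^n)
      MeasureTheory.volume x y := by
  have hcont : Continuous fun θ : ℝ => 1/(Real.cosh t + Real.sinh t * Real.cos θ)^n :=
    Continuous.div continuous_const (by fun_prop) fun θ => (pow_pos (upos t θ) n).ne'
  exact hcont.intervalIntegrable _ _

lemma integral_sq_dev (t : ℝ) :
    ∫ θ in (0:ℝ)..Real.pi, (1/(Real.cosh t + Real.sinh t * Real.cos θ) - 1)^2
      = Real.pi * (Real.cosh t - 1) := by
  have hcongr : ∀ θ : ℝ, (1/(Real.cosh t + Real.sinh t * Real.cos θ) - 1)^2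
      = 1/(Real.cosh t + Real.sinh t * Real.cos θ)^2
        - 2 * (1/(Real.cosh t + Real.sinh t * Real.cos θ)) + 1 := by
    intro θ
    have hu := upos t θ
    field_simp
    ring
  rw [intervalIntegral.integral_congr (g := fun θ =>
      1/(Real.cosh t + Real.sinh t * Real.cos θ)^2
        - 2 * (1/(Real.cosh t + Real.sinh t * Real.cos θ)) + 1)
    (fun θ _ => hcongr θ)]
  have i1 : IntervalIntegrable (fun θ => 1/(Real.cosh t + Real.sinh t * Real.cos θ))
      MeasureTheory.volume 0 Real.pi := by simpa using integrable_u_pow t 0 Real.pi 1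
  rw [intervalIntegral.integral_add (((integrable_u_pow t 0 Real.pi 2)).sub
      (i1.const_mul 2)) intervalIntegrable_const,
    intervalIntegral.integral_sub (integrable_u_pow t 0 Real.pi 2)
      (i1.const_mul 2),
    intervalIntegral.integral_const_mul]
  have h1 := integral_one_div_u t
  have h2 := integral_one_div_u_sq t
  rw [h2, h1]
  simp
  ring

open Set in
lemma key_nonneg {r : ℝ} (hr : 0 < r) (g g' g'' : ℝ → ℝ)
    (hg : ∀ y ∈ Icc (1-r) (1+r), HasDerivAt g (g' y) y)
    (hg' : ∀ y ∈ Icc (1-r) (1+r), HasDerivAt g' (g'' y) y)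
    (h0 : g 1 = 0) (h0' : g' 1 = 0)
    (h2 : ∀ y ∈ Icc (1-r) (1+r), 0 ≤ g'' y) :
    ∀ x ∈ Icc (1-r) (1+r), 0 ≤ g x := by
  have h1mem : (1:ℝ) ∈ Icc (1-r) (1+r) := by constructor <;> linarith
  have mono' : MonotoneOn g' (Icc (1-r) (1+r)) := by
    apply monotoneOn_of_deriv_nonneg (convex_Icc _ _)
    · exact fun y hy => ((hg' y hy).continuousAt).continuousWithinAt
    · intro y hy
      rw [interior_Icc] at hy
      exact (hg' y (Ioo_subset_Icc_self hy)).differentiableAt.differentiableWithinAt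
    · intro y hy
      rw [interior_Icc] at hy
      rw [(hg' y (Ioo_subset_Icc_self hy)).deriv]
      exact h2 y (Ioo_subset_Icc_self hy)
  intro x hx
  rcases le_total 1 x with hx1 | hx1
  · have monog : MonotoneOn g (Icc 1 (1+r)) := by
      have hsub : Icc (1:ℝ) (1+r) ⊆ Icc (1-r) (1+r) := Icc_subset_Icc (by linarith) le_rfl
      apply monotoneOn_of_deriv_nonneg (convex_Icc _ _)
      · exact fun y hy => ((hg y (hsub hy)).continuousAt).continuousWithinAt
      · intro y hy
        rw [interior_Icc] at hy
        exact (hg y (hsub (Ioo_subset_Icc_self hy))).differentiableAt.differentiableWithinAt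
      · intro y hy
        rw [interior_Icc] at hy
        rw [(hg y (hsub (Ioo_subset_Icc_self hy))).deriv]
        have := mono' h1mem (hsub (Ioo_subset_Icc_self hy)) hy.1.le
        linarith [h0' ▸ this]
    have := monog (left_mem_Icc.mpr (by linarith)) ⟨hx1, hx.2⟩ hx1
    linarith [h0 ▸ this]
  · have antig : AntitoneOn g (Icc (1-r) 1) := by
      have hsub : Icc (1-r) (1:ℝ) ⊆ Icc (1-r) (1+r) := Icc_subset_Icc le_rfl (by linarith)
      apply antitoneOn_of_deriv_nonpos (convex_Icc _ _)
      · exact fun y hy => ((hg y (hsub hy)).continuousAt).continuousWithinAt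
      · intro y hy
        rw [interior_Icc] at hy
        exact (hg y (hsub (Ioo_subset_Icc_self hy))).differentiableAt.differentiableWithinAt
      · intro y hy
        rw [interior_Icc] at hy
        rw [(hg y (hsub (Ioo_subset_Icc_self hy))).deriv]
        have := mono' (hsub (Ioo_subset_Icc_self hy)) h1mem hy.2.le
        linarith [h0' ▸ this]
    have := antig ⟨hx.1, hx1⟩ (right_mem_Icc.mpr (by linarith)) hx1
    linarith [h0 ▸ this]

open Set in
lemma taylor_bound (f : ℝ → ℝ) {ε : ℝ} (hε : 0 < ε)
    (hC2 : ContDiffOn ℝ 2 f (Set.Ioo (1 - ε) (1 + ε))) {δ : ℝ} (hδ : 0 < δ) :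
    ∃ r > 0, r < ε ∧ ∀ x ∈ Set.Icc (1-r) (1+r),
      |f x - f 1 - deriv f 1 * (x-1) - deriv (deriv f) 1 / 2 * (x-1)^2| ≤ δ * (x-1)^2 := by
  have hs : IsOpen (Set.Ioo (1-ε) (1+ε)) := isOpen_Ioo
  have h1s : (1:ℝ) ∈ Set.Ioo (1-ε) (1+ε) := by constructor <;> linarith
  have h1 : ContDiffOn ℝ 1 (deriv f) (Set.Ioo (1-ε) (1+ε)) :=
    hC2.deriv_of_isOpen hs (by norm_num)
  have hψ : ContinuousOn (deriv (deriv f)) (Set.Ioo (1-ε) (1+ε)) :=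
    h1.continuousOn_deriv_of_isOpen hs le_rfl
  have hψ1 : ContinuousAt (deriv (deriv f)) 1 := hψ.continuousAt (hs.mem_nhds h1s)
  obtain ⟨r₀, hr₀, hball⟩ := Metric.continuousAt_iff.mp hψ1 δ hδ
  set φ1 := deriv f 1
  set c2 := deriv (deriv f) 1
  refine ⟨min (r₀/2) (ε/2), by positivity, by
    have := min_le_right (r₀/2) (ε/2); linarith, ?_⟩
  set r := min (r₀/2) (ε/2) with hrdef
  have hrε : r ≤ ε/2 := min_le_right _ _
  have hrr₀ : r ≤ r₀/2 := min_le_left _ _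
  have hsub : Set.Icc (1-r) (1+r) ⊆ Set.Ioo (1-ε) (1+ε) := by
    intro y hy
    rcases hy with ⟨hy1, hy2⟩
    constructor <;> [linarith; linarith]
  have hψbd : ∀ y ∈ Set.Icc (1-r) (1+r), |deriv (deriv f) y - c2| < δ := by
    intro y hy
    apply hball
    rw [Real.dist_eq]
    rcases hy with ⟨hy1, hy2⟩
    rw [abs_lt]
    constructor <;> linarith [hr₀]
  have hdf : ∀ y ∈ Set.Icc (1-r) (1+r), HasDerivAt f (deriv f y) y := fun y hy =>
    ((hC2.contDiffAt (hs.mem_nhds (hsub hy))).differentiableAt (by norm_num)).hasDerivAt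
  have hdf' : ∀ y ∈ Set.Icc (1-r) (1+r),
      HasDerivAt (deriv f) (deriv (deriv f) y) y := fun y hy =>
    ((h1.contDiffAt (hs.mem_nhds (hsub hy))).differentiableAt (by norm_num)).hasDerivAt
  have hquad : ∀ (m y : ℝ),
      HasDerivAt (fun z => m/2*(z-1)^2 + f 1 + φ1*(z-1)) (m*(y-1) + φ1) y := by
    intro m y
    have h1' : HasDerivAt (fun z : ℝ => (z-1)) 1 y := (hasDerivAt_id y).sub_const 1
    have h2 := (h1'.pow 2).const_mul (m/2)
    have h3 := h1'.const_mul φ1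
    exact ((h2.add_const (f 1)).add h3).congr_deriv (by ring)
  have hlin : ∀ (m y : ℝ), HasDerivAt (fun z => m*(z-1) + φ1) m y := by
    intro m y
    have h1' : HasDerivAt (fun z : ℝ => (z-1)) 1 y := (hasDerivAt_id y).sub_const 1
    exact ((h1'.const_mul m).add_const φ1).congr_deriv (by ring)
  have hr : 0 < r := by positivity
  have hup : ∀ x ∈ Set.Icc (1-r) (1+r),
      0 ≤ (c2+δ)/2*(x-1)^2 + f 1 + φ1*(x-1) - f x := by
    apply key_nonneg hr _ (fun y => (c2+δ)*(y-1) + φ1 - deriv f y)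
      (fun y => (c2+δ) - deriv (deriv f) y)
    · exact fun y hy => (hquad (c2+δ) y).sub (hdf y hy)
    · exact fun y hy => (hlin (c2+δ) y).sub (hdf' y hy)
    · ring
    · ring
    · intro y hy
      have := hψbd y hy
      rw [abs_lt] at this
      linarith
  have hlo : ∀ x ∈ Set.Icc (1-r) (1+r),
      0 ≤ f x - ((c2-δ)/2*(x-1)^2 + f 1 + φ1*(x-1)) := by
    apply key_nonneg hr _ (fun y => deriv f y - ((c2-δ)*(y-1) + φ1))
      (fun y => deriv (deriv f) y - (c2-δ))
    · exact fun y hy => (hdf y hy).sub (hquad (c2-δ) y)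
    · exact fun y hy => (hdf' y hy).sub (hlin (c2-δ) y)
    · ring
    · ring
    · intro y hy
      have := hψbd y hy
      rw [abs_lt] at this
      linarith
  intro x hx
  have h₁ := hup x hx
  have h₂ := hlo x hx
  rw [abs_le]
  constructor <;> nlinarith [sq_nonneg (x-1)]

lemma hDiv_est (f : ℝ → ℝ) {ε : ℝ} (hε : 0 < ε)
    (hC2 : ContDiffOn ℝ 2 f (Set.Ioo (1 - ε) (1 + ε))) (hf1 : f 1 = 0) {δ : ℝ} (hδ : 0 < δ) :
    ∃ t₀ > 0, ∀ t, 0 < t → t < t₀ →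
      |hDiv f t - (deriv (deriv f) 1 / 2) * (Real.cosh t - 1)| ≤ δ * (Real.cosh t - 1) := by
  obtain ⟨r, hr, hrε, hbd⟩ := taylor_bound f hε hC2 hδ
  refine ⟨Real.log (1+r), Real.log_pos (by linarith), ?_⟩
  intro t ht ht₀
  set φ1 := deriv f 1
  set c := deriv (deriv f) 1 / 2 with hcdef
  set v : ℝ → ℝ := fun θ => 1 / (Real.cosh t + Real.sinh t * Real.cos θ) with hvdef
  have hrange : ∀ θ, v θ ∈ Set.Icc (1-r) (1+r) := by
    intro θ
    have hu := upos t θ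
    have hsinh : 0 < Real.sinh t := Real.sinh_pos_iff.mpr ht
    have hub : Real.cosh t + Real.sinh t * Real.cos θ ≤ Real.exp t := by
      rw [← Real.cosh_add_sinh]
      nlinarith [Real.cos_le_one θ]
    have hlb : Real.exp (-t) ≤ Real.cosh t + Real.sinh t * Real.cos θ := by
      rw [← Real.cosh_sub_sinh]
      nlinarith [Real.neg_one_le_cos θ]
    have het : Real.exp t < 1 + r := by
      have h := Real.exp_lt_exp.mpr ht₀
      rwa [Real.exp_log (by linarith)] at h
    have het' : 1 - r ≤ Real.exp (-t) := by
      rw [Real.exp_neg]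
      have hinv : Real.exp t * (Real.exp t)⁻¹ = 1 := mul_inv_cancel₀ (Real.exp_pos t).ne'
      nlinarith [mul_pos (sub_pos.mpr het) (inv_pos.mpr (Real.exp_pos t)), sq_nonneg r]
    have he0 : 0 < Real.exp (-t) := Real.exp_pos _
    constructor
    · calc 1 - r ≤ Real.exp (-t) := het'
        _ = 1 / Real.exp t := by rw [Real.exp_neg, one_div]
        _ ≤ v θ := by
          apply one_div_le_one_div_of_le hu hub
    · calc v θ ≤ 1 / Real.exp (-t) := one_div_le_one_div_of_le he0 hlb
        _ = Real.exp t := by rw [Real.exp_neg, one_div, inv_inv]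
        _ ≤ 1 + r := het.le
  have hpt : ∀ θ, |f (v θ) - φ1 * (v θ - 1) - c * (v θ - 1)^2| ≤ δ * (v θ - 1)^2 := by
    intro θ
    have := hbd (v θ) (hrange θ)
    simpa [hf1, hcdef] using this
  have hv : Continuous v := continuous_const.div (cont_u t) (fun θ => (upos t θ).ne')
  have hsubIcc : Set.Icc (1-r) (1+r) ⊆ Set.Ioo (1-ε) (1+ε) := by
    intro y hy
    rcases hy with ⟨h1, h2⟩
    constructor <;> linarith
  have hfA : ContinuousOn (fun θ => f (v θ)) (Set.uIcc 0 Real.pi) :=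
    (hC2.continuousOn.mono hsubIcc).comp hv.continuousOn (fun θ _ => hrange θ)
  have iA : IntervalIntegrable (fun θ => f (v θ)) MeasureTheory.volume 0 Real.pi :=
    hfA.intervalIntegrable
  have i2 : IntervalIntegrable (fun θ => φ1 * (v θ - 1)) MeasureTheory.volume 0 Real.pi :=
    (continuous_const.mul (hv.sub continuous_const)).intervalIntegrable _ _
  have i3 : IntervalIntegrable (fun θ => c * (v θ - 1)^2) MeasureTheory.volume 0 Real.pi :=
    (continuous_const.mul ((hv.sub continuous_const).pow 2)).intervalIntegrable _ _
  have iδ : IntervalIntegrable (fun θ => δ * (v θ - 1)^2) MeasureTheory.volume 0 Real.pi :=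
    (continuous_const.mul ((hv.sub continuous_const).pow 2)).intervalIntegrable _ _
  have iR : IntervalIntegrable (fun θ => f (v θ) - φ1 * (v θ - 1) - c * (v θ - 1)^2)
      MeasureTheory.volume 0 Real.pi := (iA.sub i2).sub i3
  have hIv1 : (∫ θ in (0:ℝ)..Real.pi, (v θ - 1)) = 0 := by
    rw [intervalIntegral.integral_sub
      (hv.intervalIntegrable _ _)
      intervalIntegrable_const]
    have := integral_one_div_u t
    rw [hvdef]
    simp only [this]
    simp
  have hIsq : (∫ θ in (0:ℝ)..Real.pi, (v θ - 1)^2) = Real.pi * (Real.cosh t - 1) :=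
    integral_sq_dev t
  have hsplit : (∫ θ in (0:ℝ)..Real.pi, (f (v θ) - φ1 * (v θ - 1) - c * (v θ - 1)^2))
      = (∫ θ in (0:ℝ)..Real.pi, f (v θ)) - c * (Real.pi * (Real.cosh t - 1)) := by
    rw [intervalIntegral.integral_sub (iA.sub i2) i3,
      intervalIntegral.integral_sub iA i2,
      intervalIntegral.integral_const_mul, intervalIntegral.integral_const_mul,
      hIv1, hIsq]
    ring
  have hbound : |∫ θ in (0:ℝ)..Real.pi, (f (v θ) - φ1 * (v θ - 1) - c * (v θ - 1)^2)|
      ≤ δ * (Real.pi * (Real.cosh t - 1)) := by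
    have h1 : |∫ θ in (0:ℝ)..Real.pi, (f (v θ) - φ1 * (v θ - 1) - c * (v θ - 1)^2)|
        ≤ ∫ θ in (0:ℝ)..Real.pi, |f (v θ) - φ1 * (v θ - 1) - c * (v θ - 1)^2| :=
      intervalIntegral.abs_integral_le_integral_abs Real.pi_pos.le
    have h2 : (∫ θ in (0:ℝ)..Real.pi, |f (v θ) - φ1 * (v θ - 1) - c * (v θ - 1)^2|)
        ≤ ∫ θ in (0:ℝ)..Real.pi, δ * (v θ - 1)^2 := by
      apply intervalIntegral.integral_mono_on Real.pi_pos.le iR.abs iδ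
      exact fun θ _ => hpt θ
    have h3 : (∫ θ in (0:ℝ)..Real.pi, δ * (v θ - 1)^2)
        = δ * (Real.pi * (Real.cosh t - 1)) := by
      rw [intervalIntegral.integral_const_mul, hIsq]
    linarith
  have hkey : hDiv f t - c * (Real.cosh t - 1)
      = (1/Real.pi) * ∫ θ in (0:ℝ)..Real.pi, (f (v θ) - φ1 * (v θ - 1) - c * (v θ - 1)^2) := by
    rw [hsplit]
    show (1 / Real.pi) * _ - _ = _
    field_simp
    ring
  rw [hkey, abs_mul, abs_of_pos (by positivity : (0:ℝ) < 1/Real.pi)]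
  calc 1/Real.pi * |∫ θ in (0:ℝ)..Real.pi, (f (v θ) - φ1 * (v θ - 1) - c * (v θ - 1)^2)|
      ≤ 1/Real.pi * (δ * (Real.pi * (Real.cosh t - 1))) := by
        apply mul_le_mul_of_nonneg_left hbound (by positivity)
    _ = δ * (Real.cosh t - 1) := by
        field_simp

theorem hDiv_ratio_tendsto_four (f : ℝ → ℝ) (hconv : ConvexOn ℝ (Set.Ioi 0) f) (hf1 : f 1 = 0)
    (hC2 : ∃ ε > (0 : ℝ), ContDiffOn ℝ 2 f (Set.Ioo (1 - ε) (1 + ε)))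
    (hf'' : 0 < deriv (deriv f) 1) :
    Filter.Tendsto (fun t => hDiv f (2 * t) / hDiv f t)
      (nhdsWithin 0 (Set.Ioi 0)) (nhds 4) := by
  obtain ⟨ε, hε, hC2⟩ := hC2
  set c := deriv (deriv f) 1 / 2 with hcdef
  have hc : 0 < c := by positivity
  set q : ℝ → ℝ := fun t => hDiv f t / (Real.cosh t - 1) with hqdef
  have hcosh : ∀ t : ℝ, 0 < t → 0 < Real.cosh t - 1 := by
    intro t ht
    have h := Real.one_lt_cosh.mpr (by linarith : t ≠ 0)
    linarith
  have qtendsto : Filter.Tendsto q (nhdsWithin 0 (Set.Ioi 0)) (nhds c) := by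
    rw [Metric.tendsto_nhdsWithin_nhds]
    intro η hη
    obtain ⟨t₀, ht₀, hest⟩ := hDiv_est f hε hC2 hf1 (half_pos hη)
    refine ⟨t₀, ht₀, ?_⟩
    intro t ht hdist
    rw [Real.dist_eq] at hdist ⊢
    rw [sub_zero] at hdist
    have htpos : 0 < t := ht
    have htlt : t < t₀ := by rwa [abs_of_pos htpos] at hdist
    have hch := hcosh t htpos
    have := hest t htpos htlt
    have : |q t - c| ≤ η/2 := by
      rw [hqdef]
      have heq : hDiv f t / (Real.cosh t - 1) - c
          = (hDiv f t - c * (Real.cosh t - 1)) / (Real.cosh t - 1) := by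
        field_simp
      rw [heq, abs_div, abs_of_pos hch, div_le_iff₀ hch]
      calc |hDiv f t - c * (Real.cosh t - 1)| ≤ η/2 * (Real.cosh t - 1) := hest t htpos htlt
        _ = η/2 * (Real.cosh t - 1) := rfl
    linarith [this]
  have hmul2 : Filter.Tendsto (fun t : ℝ => 2 * t) (nhdsWithin 0 (Set.Ioi 0))
      (nhdsWithin 0 (Set.Ioi 0)) := by
    apply tendsto_nhdsWithin_of_tendsto_nhds_of_eventually_within
    · have h0 : Filter.Tendsto (fun t : ℝ => 2 * t) (nhds 0) (nhds 0) := by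
        simpa using ((by continuity : Continuous fun t : ℝ => 2 * t).tendsto (0:ℝ))
      exact h0.mono_left nhdsWithin_le_nhds
    · filter_upwards [self_mem_nhdsWithin] with t ht
      exact Set.mem_Ioi.mpr (mul_pos two_pos ht)
  have q2tendsto : Filter.Tendsto (fun t => q (2 * t)) (nhdsWithin 0 (Set.Ioi 0)) (nhds c) :=
    qtendsto.comp hmul2
  have hcoshlim : Filter.Tendsto (fun t : ℝ => 2 * (Real.cosh t + 1))
      (nhdsWithin 0 (Set.Ioi 0)) (nhds 4) := by
    have : Continuous fun t : ℝ => 2 * (Real.cosh t + 1) := by continuity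
    have h := (this.tendsto 0).mono_left (nhdsWithin_le_nhds (s := Set.Ioi (0:ℝ)))
    simpa [Real.cosh_zero, show (2:ℝ)*(1+1) = 4 by norm_num] using h
  have hratio : Filter.Tendsto (fun t => 2 * (Real.cosh t + 1) * (q (2 * t) / q t))
      (nhdsWithin 0 (Set.Ioi 0)) (nhds 4) := by
    have hdiv : Filter.Tendsto (fun t => q (2 * t) / q t)
        (nhdsWithin 0 (Set.Ioi 0)) (nhds 1) := by
      have := q2tendsto.div qtendsto hc.ne'
      rw [div_self hc.ne'] at this
      exact this
    have := hcoshlim.mul hdiv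
    simpa using this
  apply hratio.congr'
  have hqev : ∀ᶠ t in nhdsWithin 0 (Set.Ioi 0), c/2 < q t :=
    qtendsto.eventually (eventually_gt_nhds (by linarith))
  filter_upwards [hqev, self_mem_nhdsWithin] with t hqt ht
  have htpos : (0:ℝ) < t := ht
  have hch := hcosh t htpos
  have hqne : q t ≠ 0 := (lt_trans (half_pos hc) hqt).ne'
  have hch2 : 0 < Real.cosh (2*t) - 1 := hcosh (2*t) (by linarith)
  have hdiv1 : hDiv f t = q t * (Real.cosh t - 1) := by
    rw [hqdef]
    field_simp
  have hdiv2 : hDiv f (2*t) = q (2*t) * (Real.cosh (2*t) - 1) := by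
    rw [hqdef]
    field_simp [hch2.ne']
  have hcosh2 : Real.cosh (2*t) - 1 = 2 * (Real.cosh t - 1) * (Real.cosh t + 1) := by
    rw [Real.cosh_two_mul]
    linear_combination -Real.cosh_sq_sub_sinh_sq t
  rw [hdiv1, hdiv2, hcosh2]
  field_simp
end
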